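/- arXiv:2403.17715 — 2 statements merged into one kernel-verified Lean document; each statement's English description precedes it below -/
import Mathlib

section
/- Let G be a finite simple connected graph that is not a cycle and has at least two vertices. Then for every real number λ, m(G, λ) ≤ 2c(G) + p(G) - 1, where c(G) = |E(G)| - |V(G)| + 1 is the cyclomatic number and p(G) is the number of pendant vertices. -/
open scoped Classical

/-- Multiplicity of `lam` as an eigenvalue of a real symmetric matrix:
dimension of the kernel of `A - lam • 1`. -/
noncomputable def matMult {V : Type*} [Fintype V] [DecidableEq V]
    (A : Matrix V V ℝ) (lam : ℝ) : ℕ :=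
  Module.finrank ℝ (LinearMap.ker (Matrix.toLin' (A - lam • (1 : Matrix V V ℝ))))

/-- Adjacency matrix of a simple graph over ℝ. -/
noncomputable def adjM {V : Type*} [Fintype V] (G : SimpleGraph V) : Matrix V V ℝ :=
  fun i j => if G.Adj i j then 1 else 0

/-- Multiplicity of `lam` as an eigenvalue of the adjacency matrix of `G`. -/
noncomputable def gMult {V : Type*} [Fintype V] (G : SimpleGraph V) (lam : ℝ) : ℕ :=
  matMult (adjM G) lam

/-- Multiplicity of `lam` as an eigenvalue of the induced subgraph of `G` on `s`. -/
noncomputable def sMult {V : Type*} [Fintype V] (G : SimpleGraph V) (s : Set V) (lam : ℝ) : ℕ :=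
  gMult (G.induce s) lam

/-- Degree of a vertex, via the cardinality of its neighbor set. -/
noncomputable def deg {V : Type*} (G : SimpleGraph V) (v : V) : ℕ :=
  (G.neighborSet v).ncard

/-- Number of pendant (degree-1) vertices. -/
noncomputable def pendCount {V : Type*} (G : SimpleGraph V) : ℕ :=
  {v : V | deg G v = 1}.ncard

/-- Number of pendant vertices, with the paper's convention that a
single-vertex graph has `p = 2`. -/
noncomputable def pendCount' {V : Type*} (G : SimpleGraph V) : ℕ :=
  if Nat.card V ≤ 1 then 2 else pendCount G

/-- A graph is (isomorphic to) a path graph. -/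
def IsPathGraph {W : Type*} (H : SimpleGraph W) : Prop :=
  ∃ n : ℕ, Nonempty (H ≃g SimpleGraph.pathGraph n)

/-- The vertex sets (as subsets of `V`) of the connected components of `G - w`. -/
def compSupp {V : Type*} (G : SimpleGraph V) (w : V)
    (c : (G.induce {u | u ≠ w}).ConnectedComponent) : Set V :=
  Subtype.val '' c.supp

open Matrix SimpleGraph

section Aux
variable {V : Type*}

/-- zero-forcing closure -/
inductive Forced {V : Type*} (G : SimpleGraph V) (S : Set V) : V → Prop
  | mem : ∀ v, v ∈ S → Forced G S v
  | force : ∀ u v, Forced G S u → G.Adj u v →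
      (∀ w, G.Adj u w → w ≠ v → Forced G S w) → Forced G S v

lemma forced_zero {V : Type*} [Fintype V] (G : SimpleGraph V) (S : Set V) (lam : ℝ)
    (x : V → ℝ) (hx : ((adjM G - lam • (1 : Matrix V V ℝ))) *ᵥ x = 0)
    {v : V} (hv : Forced G S v) (hS : ∀ s ∈ S, x s = 0) : x v = 0 := by
  induction hv with
  | mem v h => exact hS v h
  | force u v hu hadj hall ihu ihall =>
    have h0 : ((adjM G - lam • (1 : Matrix V V ℝ)) *ᵥ x) u = 0 := by rw [hx]; rfl
    have hsum : ∑ w, (adjM G - lam • (1 : Matrix V V ℝ)) u w * x w = 0 := h0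
    have hterm : ∀ w, w ≠ v → (adjM G - lam • (1 : Matrix V V ℝ)) u w * x w = 0 := by
      intro w hw
      by_cases haw : G.Adj u w
      · have : x w = 0 := ihall w haw hw
        simp [this]
      · by_cases huw : u = w
        · subst huw
          have : x u = 0 := ihu
          simp [this]
        · simp [adjM, Matrix.sub_apply, Matrix.one_apply, haw, huw]
    have hv' : (adjM G - lam • (1 : Matrix V V ℝ)) u v * x v = 0 := by
      rw [← hsum]
      exact (Finset.sum_eq_single_of_mem v (Finset.mem_univ v)
        (fun w _ hw => hterm w hw)).symm
    have hcoef : (adjM G - lam • (1 : Matrix V V ℝ)) u v = 1 := by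
      have hne : u ≠ v := G.ne_of_adj hadj
      simp [adjM, Matrix.sub_apply, Matrix.one_apply, hadj, hne]
    rw [hcoef, one_mul] at hv'
    exact hv'

lemma gMult_le_forcing {V : Type*} [Fintype V] (G : SimpleGraph V) (S : Set V)
    (hf : ∀ v, Forced G S v) (lam : ℝ) : gMult G lam ≤ S.ncard := by
  classical
  set B := adjM G - lam • (1 : Matrix V V ℝ)
  set K := LinearMap.ker (Matrix.toLin' B)
  have hinj : Function.Injective
      ((LinearMap.funLeft ℝ ℝ (Subtype.val : S → V)).comp K.subtype) := by
    intro x y hxy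
    have hxy' : ∀ s : S, (x : V → ℝ) s = (y : V → ℝ) s := fun s =>
      congrFun hxy s
    have hdiff : B *ᵥ ((x : V → ℝ) - (y : V → ℝ)) = 0 := by
      have hm : ((x - y : K) : V → ℝ) ∈ K := (x - y : K).2
      rw [LinearMap.mem_ker, Matrix.toLin'_apply] at hm
      simpa using hm
    have hz : ∀ v, ((x : V → ℝ) - (y : V → ℝ)) v = 0 := by
      intro v
      refine forced_zero G S lam _ hdiff (hf v) ?_
      intro s hs
      have := hxy' ⟨s, hs⟩
      simp [this]
    apply Subtype.ext
    funext v
    have := hz v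
    simpa [sub_eq_zero] using this
  have := LinearMap.finrank_le_finrank_of_injective hinj
  have hcard : Module.finrank ℝ (S → ℝ) = S.ncard := by
    rw [Module.finrank_pi ℝ]
    rw [← Nat.card_coe_set_eq, Nat.card_eq_fintype_card]
  calc gMult G lam = Module.finrank ℝ K := rfl
    _ ≤ Module.finrank ℝ (S → ℝ) := this
    _ = S.ncard := hcard

namespace SimpleGraph
variable {V : Type*} {T : SimpleGraph V}

lemma dist_zero_eq {G : SimpleGraph V} (hc : G.Connected) {a b : V} (h : G.dist a b = 0) :
    a = b := (hc.dist_eq_zero_iff).1 h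

/-- vertices on a path from r have dist ≤ length -/
lemma dist_le_of_mem_support {r a w : V} (p : T.Walk r a) (hw : w ∈ p.support) :
    T.dist r w ≤ p.length := by
  have h1 : T.dist r w ≤ (p.takeUntil w hw).length := SimpleGraph.dist_le _
  have h2 : (p.takeUntil w hw).length ≤ p.length := SimpleGraph.Walk.length_takeUntil_le p hw
  omega

lemma IsTree.adj_dist (hT : T.IsTree) (r : V) {a b : V} (h : T.Adj a b) :
    T.dist r b = T.dist r a + 1 ∨ T.dist r a = T.dist r b + 1 := by
  have hconn := hT.isConnected
  have h1 : T.dist r b ≤ T.dist r a + 1 := by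
    have := hconn.dist_triangle (u := r) (v := a) (w := b)
    rwa [(SimpleGraph.dist_eq_one_iff_adj).2 h] at this
  have h2 : T.dist r a ≤ T.dist r b + 1 := by
    have := hconn.dist_triangle (u := r) (v := b) (w := a)
    rwa [(SimpleGraph.dist_eq_one_iff_adj).2 h.symm] at this
  have hne : T.dist r a ≠ T.dist r b := by
    intro heq
    obtain ⟨p, hp, hpl⟩ := hconn.exists_path_of_dist r a
    obtain ⟨q, hq, hql⟩ := hconn.exists_path_of_dist r b
    by_cases ha : a ∈ q.support
    · -- takeUntil is shorter
      have h3 : T.dist r a ≤ (q.takeUntil a ha).length := SimpleGraph.dist_le _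
      have h4 := congr_arg SimpleGraph.Walk.length (q.take_spec ha)
      rw [SimpleGraph.Walk.length_append] at h4
      have h5 : 1 ≤ (q.dropUntil a ha).length := by
        by_contra h5
        push_neg at h5
        interval_cases hl : (q.dropUntil a ha).length
        · have := SimpleGraph.Walk.eq_of_length_eq_zero hl
          exact h.ne this
      omega
    · have hq' : (q.concat h.symm).IsPath := by
        rw [← SimpleGraph.Walk.isPath_reverse_iff, SimpleGraph.Walk.reverse_concat,
          SimpleGraph.Walk.cons_isPath_iff]
        refine ⟨SimpleGraph.Walk.isPath_reverse_iff q |>.2 hq, ?_⟩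
        simpa using ha
      have := hT.existsUnique_path r a
      have heq2 : p = q.concat h.symm := (this.unique hp hq')
      have : p.length = (q.concat h.symm).length := by rw [heq2]
      rw [SimpleGraph.Walk.length_concat] at this
      omega
  omega

lemma IsTree.parent_exists (hT : T.IsTree) {r y : V} (hy : y ≠ r) :
    ∃ a, T.Adj a y ∧ T.dist r a + 1 = T.dist r y := by
  have hconn := hT.isConnected
  obtain ⟨p, hp, hpl⟩ := hconn.exists_path_of_dist r y
  obtain ⟨a, h, q, hq⟩ := SimpleGraph.Walk.exists_eq_cons_of_ne hy p.reverse
  refine ⟨a, h.symm, ?_⟩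
  have hlen : p.reverse.length = 1 + q.length := by rw [hq]; simp [SimpleGraph.Walk.length_cons]; omega
  rw [SimpleGraph.Walk.length_reverse] at hlen
  have hda : T.dist r a ≤ q.length := by
    have := SimpleGraph.dist_le q.reverse
    rwa [SimpleGraph.Walk.length_reverse] at this
  have h2 : T.dist r y ≤ T.dist r a + 1 := by
    have := hconn.dist_triangle (u := r) (v := a) (w := y)
    rwa [(SimpleGraph.dist_eq_one_iff_adj).2 (h.symm)] at this
  omega

lemma IsTree.parent_unique (hT : T.IsTree) {r y a b : V} (ha : T.Adj a y) (hb : T.Adj b y)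
    (hda : T.dist r a + 1 = T.dist r y) (hdb : T.dist r b + 1 = T.dist r y) : a = b := by
  have hconn := hT.isConnected
  obtain ⟨p, hp, hpl⟩ := hconn.exists_path_of_dist r a
  obtain ⟨q, hq, hql⟩ := hconn.exists_path_of_dist r b
  have hyp : y ∉ p.support := by
    intro hmem
    have := dist_le_of_mem_support p hmem
    omega
  have hyq : y ∉ q.support := by
    intro hmem
    have := dist_le_of_mem_support q hmem
    omega
  have hp' : (p.concat ha).IsPath := by
    rw [← SimpleGraph.Walk.isPath_reverse_iff, SimpleGraph.Walk.reverse_concat,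
      SimpleGraph.Walk.cons_isPath_iff]
    refine ⟨SimpleGraph.Walk.isPath_reverse_iff p |>.2 hp, ?_⟩
    simpa using hyp
  have hq' : (q.concat hb).IsPath := by
    rw [← SimpleGraph.Walk.isPath_reverse_iff, SimpleGraph.Walk.reverse_concat,
      SimpleGraph.Walk.cons_isPath_iff]
    refine ⟨SimpleGraph.Walk.isPath_reverse_iff q |>.2 hq, ?_⟩
    simpa using hyq
  have huniq := hT.existsUnique_path r y
  have heq : p.concat ha = q.concat hb := huniq.unique hp' hq'
  have h1 : (p.concat ha).reverse = (q.concat hb).reverse := by rw [heq]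
  rw [SimpleGraph.Walk.reverse_concat, SimpleGraph.Walk.reverse_concat] at h1
  have : ((SimpleGraph.Walk.cons ha.symm p.reverse)).getVert 1 =
      ((SimpleGraph.Walk.cons hb.symm q.reverse)).getVert 1 := by rw [h1]
  simpa [SimpleGraph.Walk.getVert_cons] using this

lemma Connected.exists_adj {G : SimpleGraph V} [Fintype V] (hconn : G.Connected)
    (hcard : 2 ≤ Fintype.card V) (v : V) : ∃ w, G.Adj v w := by
  obtain ⟨w, hw⟩ := Fintype.exists_ne_of_one_lt_card (by omega) v
  obtain ⟨p⟩ := hconn.preconnected v w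
  obtain ⟨a, h, q, _⟩ := SimpleGraph.Walk.exists_eq_cons_of_ne (Ne.symm hw) p
  exact ⟨a, h⟩

end SimpleGraph

/-- Master forcing lemma: with a spanning tree `T` of `G`, a set containing all
`T`-leaves and all endpoints of non-tree edges, possibly excepting a designated
vertex `v₀`, forces all of `G`. -/
lemma master_forcing {V : Type*} [Fintype V] (G T : SimpleGraph V) (hle : T ≤ G)
    (hT : T.IsTree) (hcard : 2 ≤ Fintype.card V) (S : Set V) (r v₀ : V)
    (h1 : ∀ y, (T.neighborSet y).ncard = 1 → y ≠ v₀ → y ∈ S)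
    (h2 : ∀ y z, G.Adj y z → ¬ T.Adj y z → y ≠ v₀ → y ∈ S)
    (h3 : v₀ ∈ S ∨ ∀ z, G.Adj z v₀ → ¬ T.Adj z v₀ → z = r)
    (h4 : v₀ = r ∨ 2 ≤ (T.neighborSet v₀).ncard ∨ v₀ ∈ S) :
    ∀ v, Forced G S v := by
  classical
  by_contra hcon
  push_neg at hcon
  set U : Set V := {v | ¬ Forced G S v} with hUdef
  have hUne : U.toFinset.Nonempty := by
    obtain ⟨v, hv⟩ := hcon
    exact ⟨v, by simpa [U] using hv⟩
  obtain ⟨y, hyU, hymax⟩ := Finset.exists_max_image U.toFinset (fun v => T.dist r v) hUne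
  rw [Set.mem_toFinset] at hyU
  have hymax' : ∀ u : V, ¬ Forced G S u → T.dist r u ≤ T.dist r y := by
    intro u hu
    exact hymax u (by simpa [U] using hu)
  have hyF : ¬ Forced G S y := hyU
  have hSF : ∀ s ∈ S, Forced G S s := fun s hs => Forced.mem s hs
  have hGconn : G.Connected := hT.isConnected.mono hle
  by_cases hyr : y = r
  · -- U = {r}; any neighbor of r forces r
    subst hyr
    obtain ⟨w, hw⟩ := Connected.exists_adj hGconn hcard y
    have hwF : Forced G S w := by
      by_contra hwF
      have hle' := hymax' w hwF
      have h0 : T.dist y y = 0 := by simp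
      rw [h0] at hle'
      have h1' : T.dist y w = 0 := Nat.le_zero.mp hle'
      exact G.ne_of_adj hw (SimpleGraph.dist_zero_eq hT.isConnected h1')
    refine hyF (Forced.force w y hwF hw.symm ?_)
    intro z hz hzy
    by_contra hzF
    have hle' := hymax' z hzF
    have h0 : T.dist y y = 0 := by simp
    rw [h0] at hle'
    have h1' : T.dist y z = 0 := Nat.le_zero.mp hle'
    exact hzy (SimpleGraph.dist_zero_eq hT.isConnected h1').symm
  · -- y ≠ r
    have hyS : y ∉ S := fun h => hyF (hSF y h)
    -- y is not a T-leaf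
    have hnleaf : (T.neighborSet y).ncard ≠ 1 := by
      intro hleaf
      have hyv : y = v₀ := by
        by_contra hyv
        exact hyS (h1 y hleaf hyv)
      rcases h4 with h | h | h
      · exact hyr (hyv ▸ h)
      · rw [← hyv] at h; omega
      · exact hyS (hyv ▸ h)
    -- parent of y
    obtain ⟨pa, hpa, hdpa⟩ := hT.parent_exists hyr
    -- y has a child z
    have hchild : ∃ z, T.Adj y z ∧ T.dist r z = T.dist r y + 1 := by
      by_contra hch
      push_neg at hch
      have hsub : T.neighborSet y ⊆ {pa} := by
        intro z hz
        rcases hT.adj_dist r hz with h | h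
        · exact absurd h (hch z hz)
        · have hz' : z = pa := hT.parent_unique (r := r) hz.symm hpa (by omega) hdpa
          exact Set.mem_singleton_iff.mpr hz'
      have : (T.neighborSet y).ncard ≤ 1 := by
        have := Set.ncard_le_ncard hsub (Set.finite_singleton pa)
        simpa using this
      have hne : (T.neighborSet y).Nonempty := by
        obtain ⟨w, hw⟩ := Connected.exists_adj hT.isConnected hcard y
        exact ⟨w, hw⟩
      have : 1 ≤ (T.neighborSet y).ncard := by
        rw [Nat.one_le_iff_ne_zero]
        simpa [Set.ncard_eq_zero (Set.toFinite _)] using hne.ne_empty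
      omega
    obtain ⟨z, hyz, hdz⟩ := hchild
    have hzF : Forced G S z := by
      by_contra hzf
      have := hymax' z hzf
      omega
    have hzr : z ≠ r := by
      intro h
      rw [h, SimpleGraph.dist_self] at hdz
      omega
    refine hyF (Forced.force z y hzF (hle hyz.symm) ?_)
    intro w hzw hwy
    by_cases hTzw : T.Adj z w
    · rcases hT.adj_dist r hTzw with h | h
      · -- w is farther
        by_contra hwF
        have := hymax' w hwF
        omega
      · -- w is a parent of z at dist (dist y), so w = y
        exfalso
        have : w = y := hT.parent_unique (r := r) hTzw.symm hyz (by omega) (by omega)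
        exact hwy this
    · -- non-tree edge z-w
      by_cases hwv : w = v₀
      · subst hwv
        rcases h3 with h | h
        · exact hSF w h
        · exact absurd (h z hzw hTzw) hzr
      · exact hSF w (h2 w z hzw.symm (fun h => hTzw h.symm) hwv)


lemma reachable_delete_edge (G : SimpleGraph V) {a b : V}
    (h' : (G \ fromEdgeSet {s(a,b)}).Reachable a b) {x y : V} (p : G.Walk x y) :
    (G \ fromEdgeSet {s(a,b)}).Reachable x y := by
  induction p with
  | nil => rfl
  | cons h q ih =>
    rename_i u w z
    refine Reachable.trans ?_ ih
    by_cases he : s(u, w) = s(a, b)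
    · rw [Sym2.eq_iff] at he
      rcases he with ⟨rfl, rfl⟩ | ⟨rfl, rfl⟩
      · exact h'
      · exact h'.symm
    · refine SimpleGraph.Adj.reachable ?_
      refine ⟨h, ?_⟩
      simp [he]

lemma exists_spanning_tree_aux [Fintype V] :
    ∀ (n : ℕ) (G : SimpleGraph V), G.edgeSet.ncard ≤ n → G.Connected →
      ∃ T, T ≤ G ∧ T.IsTree := by
  intro n
  induction n with
  | zero =>
    intro G hcard hconn
    by_cases hac : G.IsAcyclic
    · exact ⟨G, le_rfl, ⟨hconn, hac⟩⟩
    · exfalso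
      rw [SimpleGraph.isAcyclic_iff_forall_adj_isBridge] at hac
      push_neg at hac
      obtain ⟨v, w, hvw, -⟩ := hac
      have hne : G.edgeSet.Nonempty := ⟨s(v,w), hvw⟩
      have := Set.ncard_pos (G.edgeSet.toFinite) |>.2 hne
      omega
  | succ n ih =>
    intro G hcard hconn
    by_cases hac : G.IsAcyclic
    · exact ⟨G, le_rfl, ⟨hconn, hac⟩⟩
    · unfold SimpleGraph.IsAcyclic at hac
      push_neg at hac
      obtain ⟨v, c, hc⟩ := hac
      have hlen := hc.three_le_length
      have hedges : c.edges ≠ [] := by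
        intro h
        have := SimpleGraph.Walk.length_edges c
        rw [h] at this
        simp at this
        omega
      obtain ⟨e, he⟩ := List.exists_mem_of_ne_nil _ hedges
      induction e with
      | _ a b =>
      have heG : s(a, b) ∈ G.edgeSet := SimpleGraph.Walk.edges_subset_edgeSet c he
      have hnd : a ≠ b := (G.mem_edgeSet.1 heG).ne
      have hreach : G.Adj a b ∧ (G \ fromEdgeSet {s(a,b)}).Reachable a b :=
        (SimpleGraph.adj_and_reachable_delete_edges_iff_exists_cycle).2 ⟨v, c, hc, he⟩
      set G' := G \ fromEdgeSet {s(a,b)} with hG'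
      have hconn' : G'.Connected := by
        rw [SimpleGraph.connected_iff]
        refine ⟨?_, hconn.nonempty⟩
        intro x y
        obtain ⟨p⟩ := hconn.preconnected x y
        exact reachable_delete_edge G hreach.2 p
      have hedgesub : G'.edgeSet = G.edgeSet \ {s(a,b)} := by
        rw [hG', SimpleGraph.edgeSet_sdiff, SimpleGraph.edgeSet_fromEdgeSet]
        ext e'
        simp only [Set.mem_diff, Set.mem_singleton_iff]
        constructor
        · rintro ⟨h1, h2⟩
          refine ⟨h1, fun h => h2 ⟨h, ?_⟩⟩
          subst h
          simpa using hnd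
        · rintro ⟨h1, h2⟩
          exact ⟨h1, fun h => h2 h.1⟩
      have hcard' : G'.edgeSet.ncard ≤ n := by
        have hss : G'.edgeSet ⊂ G.edgeSet := by
          rw [hedgesub]
          refine Set.sdiff_singleton_ssubset.mpr heG
        have := Set.ncard_lt_ncard hss (G.edgeSet.toFinite)
        omega
      obtain ⟨T, hT1, hT2⟩ := ih G' hcard' hconn'
      exact ⟨T, le_trans hT1 (by rw [hG']; exact sdiff_le), hT2⟩

noncomputable def ends [DecidableEq V] (e : Sym2 V) : Finset V :=
  Sym2.lift ⟨fun a b => {a, b}, fun a b => by ext x; simp; tauto⟩ e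

lemma ends_pair [DecidableEq V] (a b : V) : ends s(a, b) = {a, b} := rfl

lemma card_ends_le [DecidableEq V] (e : Sym2 V) : (ends e).card ≤ 2 := by
  induction e with
  | _ a b =>
    rw [ends_pair]
    exact Finset.card_insert_le _ _ |>.trans (by simp)

lemma X_subset_biUnion [Fintype V] (G T : SimpleGraph V) :
    {x | ∃ z, G.Adj x z ∧ ¬ T.Adj x z}.toFinset ⊆
      (G.edgeSet \ T.edgeSet).toFinset.biUnion ends := by
  intro x hx
  rw [Set.mem_toFinset] at hx
  obtain ⟨z, h1, h2⟩ := hx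
  rw [Finset.mem_biUnion]
  refine ⟨s(x, z), ?_, ?_⟩
  · rw [Set.mem_toFinset]
    exact ⟨h1, fun h => h2 h⟩
  · rw [ends_pair]
    simp

lemma ncard_X_le [Fintype V] (G T : SimpleGraph V) :
    {x | ∃ z, G.Adj x z ∧ ¬ T.Adj x z}.ncard ≤ 2 * (G.edgeSet \ T.edgeSet).ncard := by
  rw [Set.ncard_eq_toFinset_card', Set.ncard_eq_toFinset_card']
  calc {x | ∃ z, G.Adj x z ∧ ¬ T.Adj x z}.toFinset.card
      ≤ ((G.edgeSet \ T.edgeSet).toFinset.biUnion ends).card :=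
        Finset.card_le_card (X_subset_biUnion G T)
    _ ≤ (G.edgeSet \ T.edgeSet).toFinset.card * 2 :=
        Finset.card_biUnion_le_card_mul _ _ _ (fun e _ => card_ends_le e)
    _ = 2 * (G.edgeSet \ T.edgeSet).toFinset.card := by ring

lemma ncard_X_le_sharp [Fintype V] (G T : SimpleGraph V) {a b z : V}
    (h1 : s(a,b) ∈ G.edgeSet \ T.edgeSet) (h2 : s(z,b) ∈ G.edgeSet \ T.edgeSet)
    (hne : s(a,b) ≠ s(z,b)) :
    {x | ∃ z, G.Adj x z ∧ ¬ T.Adj x z}.ncard + 1 ≤ 2 * (G.edgeSet \ T.edgeSet).ncard := by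
  classical
  set A := (G.edgeSet \ T.edgeSet).toFinset with hA
  have h1' : s(a,b) ∈ A := by rw [hA, Set.mem_toFinset]; exact h1
  have h2' : s(z,b) ∈ A := by rw [hA, Set.mem_toFinset]; exact h2
  have hsub : ({s(a,b), s(z,b)} : Finset (Sym2 V)) ⊆ A := by
    intro e he
    rcases Finset.mem_insert.1 he with h | h
    · exact h ▸ h1'
    · exact (Finset.mem_singleton.1 h) ▸ h2'
  have hAsplit : A = {s(a,b), s(z,b)} ∪ (A \ {s(a,b), s(z,b)}) :=
    (Finset.union_sdiff_of_subset hsub).symm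
  have hcard1 : (({s(a,b), s(z,b)} : Finset (Sym2 V)).biUnion ends).card ≤ 3 := by
    have : (({s(a,b), s(z,b)} : Finset (Sym2 V)).biUnion ends) ⊆ {a, b, z} := by
      intro x hx
      rw [Finset.mem_biUnion] at hx
      obtain ⟨e, he, hxe⟩ := hx
      rcases Finset.mem_insert.1 he with h | h
      · subst h; rw [ends_pair] at hxe; simp at hxe ⊢; tauto
      · rw [Finset.mem_singleton] at h; subst h
        rw [ends_pair] at hxe; simp at hxe ⊢; tauto
    calc _ ≤ ({a, b, z} : Finset V).card := Finset.card_le_card this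
      _ ≤ 3 := by
        refine (Finset.card_insert_le _ _).trans ?_
        have := Finset.card_insert_le b ({z} : Finset V)
        simp at this ⊢
        omega
  have hcard2 : ((A \ {s(a,b), s(z,b)}).biUnion ends).card ≤ (A.card - 2) * 2 := by
    have hc : (A \ {s(a,b), s(z,b)}).card = A.card - 2 := by
      rw [Finset.card_sdiff_of_subset hsub]
      congr 1
      rw [Finset.card_insert_of_notMem (by simpa using hne), Finset.card_singleton]
    rw [← hc]
    exact Finset.card_biUnion_le_card_mul _ _ _ (fun e _ => card_ends_le e)
  have hA2 : 2 ≤ A.card := by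
    have : ({s(a,b), s(z,b)} : Finset (Sym2 V)).card = 2 := by
      rw [Finset.card_insert_of_notMem (by simpa using hne), Finset.card_singleton]
    rw [← this]
    exact Finset.card_le_card hsub
  have hmain : {x | ∃ z, G.Adj x z ∧ ¬ T.Adj x z}.toFinset.card ≤ 3 + (A.card - 2) * 2 := by
    calc {x | ∃ z, G.Adj x z ∧ ¬ T.Adj x z}.toFinset.card
        ≤ (A.biUnion ends).card := Finset.card_le_card (X_subset_biUnion G T)
      _ = (({s(a,b), s(z,b)} ∪ (A \ {s(a,b), s(z,b)})).biUnion ends).card := by rw [← hAsplit]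
      _ ≤ (({s(a,b), s(z,b)} : Finset (Sym2 V)).biUnion ends ∪
            (A \ {s(a,b), s(z,b)}).biUnion ends).card := by
          refine Finset.card_le_card ?_
          intro x hx
          rw [Finset.mem_biUnion] at hx
          obtain ⟨e, he, hxe⟩ := hx
          rw [Finset.mem_union] at he ⊢
          rcases he with h | h
          · exact Or.inl (Finset.mem_biUnion.2 ⟨e, h, hxe⟩)
          · exact Or.inr (Finset.mem_biUnion.2 ⟨e, h, hxe⟩)
      _ ≤ _ := (Finset.card_union_le _ _).trans (by omega)
  rw [Set.ncard_eq_toFinset_card', Set.ncard_eq_toFinset_card']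
  rw [hA] at hmain hA2
  omega

lemma ncard_neighborSet_eq_degree [Fintype V] (G : SimpleGraph V) (v : V) :
    (G.neighborSet v).ncard = G.degree v := by
  rw [← SimpleGraph.card_neighborSet_eq_degree]
  rw [Set.ncard_eq_toFinset_card']
  rw [Set.toFinset_card]

lemma Connected.exists_adj' {G : SimpleGraph V} [Fintype V] (hconn : G.Connected)
    (hcard : 2 ≤ Fintype.card V) (v : V) : ∃ w, G.Adj v w := by
  obtain ⟨w, hw⟩ := Fintype.exists_ne_of_one_lt_card (by omega) v
  obtain ⟨p⟩ := hconn.preconnected v w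
  obtain ⟨a, h, q, _⟩ := SimpleGraph.Walk.exists_eq_cons_of_ne (Ne.symm hw) p
  exact ⟨a, h⟩

lemma exists_leaf [Fintype V] {T : SimpleGraph V} (hT : T.IsTree)
    (hcard : 2 ≤ Fintype.card V) : ∃ v, (T.neighborSet v).ncard = 1 := by
  by_contra hno
  push_neg at hno
  have hge : ∀ v, 2 ≤ T.degree v := by
    intro v
    obtain ⟨w, hw⟩ := Connected.exists_adj' hT.isConnected hcard v
    have h1 : 1 ≤ T.degree v := by
      rw [← SimpleGraph.card_neighborSet_eq_degree]
      exact Fintype.card_pos_iff.2 ⟨⟨w, hw⟩⟩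
    have h2 : T.degree v ≠ 1 := by
      rw [← ncard_neighborSet_eq_degree]
      exact hno v
    omega
  have hsum := SimpleGraph.sum_degrees_eq_twice_card_edges T
  have hcardE := hT.card_edgeFinset
  have hle : 2 * Fintype.card V ≤ ∑ v, T.degree v := by
    calc 2 * Fintype.card V = ∑ _v : V, 2 := by
          rw [Finset.sum_const, Finset.card_univ]; ring
      _ ≤ ∑ v, T.degree v := Finset.sum_le_sum (fun v _ => hge v)
  rw [hsum] at hle
  omega

lemma walk_closed {G : SimpleGraph V} (P : Set V)
    (hcl : ∀ a ∈ P, ∀ b, G.Adj a b → b ∈ P) {a b : V} (p : G.Walk a b) :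
    a ∈ P → b ∈ P := by
  induction p with
  | nil => exact id
  | cons h q ih => exact fun ha => ih (hcl _ ha _ h)

lemma closed_adj_univ {G : SimpleGraph V} (hconn : G.Connected) (P : Set V) {x : V}
    (hx : x ∈ P) (hcl : ∀ a ∈ P, ∀ b, G.Adj a b → b ∈ P) (y : V) : y ∈ P := by
  obtain ⟨p⟩ := hconn.preconnected x y
  exact walk_closed P hcl p hx

lemma getVert_injOn_path {G : SimpleGraph V} {u w : V} {p : G.Walk u w}
    (hp : p.support.Nodup) :
    ∀ k, k ≤ p.length → ∀ l, l ≤ p.length → p.getVert k = p.getVert l → k = l := by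
  induction p with
  | nil => intro k hk l hl _; simp at hk hl; omega
  | cons h q ih =>
    rename_i a b c'
    rw [SimpleGraph.Walk.support_cons, List.nodup_cons] at hp
    intro k hk l hl heq
    rw [SimpleGraph.Walk.length_cons] at hk hl
    match k, l with
    | 0, 0 => rfl
    | 0, l+1 =>
      exfalso
      rw [SimpleGraph.Walk.getVert_zero, SimpleGraph.Walk.getVert_cons_succ] at heq
      exact hp.1 (SimpleGraph.Walk.mem_support_iff_exists_getVert.2 ⟨l, heq.symm, by omega⟩)
    | k+1, 0 =>
      exfalso
      rw [SimpleGraph.Walk.getVert_zero, SimpleGraph.Walk.getVert_cons_succ] at heq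
      exact hp.1 (SimpleGraph.Walk.mem_support_iff_exists_getVert.2 ⟨k, heq, by omega⟩)
    | k+1, l+1 =>
      rw [SimpleGraph.Walk.getVert_cons_succ, SimpleGraph.Walk.getVert_cons_succ] at heq
      have := ih hp.2 k (by omega) l (by omega) heq
      omega

lemma good_edge_or_iso [Fintype V] (G : SimpleGraph V) (hconn : G.Connected)
    (hnac : ¬ G.IsAcyclic) :
    (∃ a b, G.Adj a b ∧ ¬ G.IsBridge s(a,b) ∧ 3 ≤ (G.neighborSet b).ncard) ∨
    ∃ n, Nonempty (G ≃g cycleGraph n) := by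
  unfold SimpleGraph.IsAcyclic at hnac
  push_neg at hnac
  obtain ⟨v, c, hc⟩ := hnac
  by_cases hdeg : ∃ w ∈ c.support, 3 ≤ (G.neighborSet w).ncard
  · left
    obtain ⟨w, hw, hdw⟩ := hdeg
    have hc' : (c.rotate w hw).IsCycle := hc.rotate hw
    set c' := c.rotate w hw with hc'def
    cases hcc : c' with
    | nil =>
      exfalso
      have := hc'.isCircuit.not_nil
      rw [hcc] at this
      exact this SimpleGraph.Walk.nil_nil
    | cons h q =>
      rename_i b
      refine ⟨b, w, h.symm, ?_, hdw⟩
      have hmem : s(b, w) ∈ c'.edges := by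
        rw [hcc, SimpleGraph.Walk.edges_cons, Sym2.eq_swap]
        exact List.mem_cons_self
      intro hbr
      rw [SimpleGraph.isBridge_iff_forall_cycle_notMem (c'.edges_subset_edgeSet hmem)] at hbr
      exact hbr c' hc' hmem
  · right
    push_neg at hdeg
    have h3l := hc.three_le_length
    obtain ⟨m, hm⟩ : ∃ m, c.length = m + 3 := ⟨c.length - 3, by omega⟩
    set N := m + 3 with hN
    refine ⟨N, ⟨?_⟩⟩
    set f : Fin N → V := fun i => c.getVert (i.val + 1) with hf
    have hnotnil : ¬ c.Nil := hc.isCircuit.not_nil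
    -- consecutive adjacency
    have hadj : ∀ i : Fin N, G.Adj (f i) (f (i + 1)) := by
      intro i
      by_cases hlast : i = Fin.last (m + 2)
      · have hval : ((i + 1 : Fin N)).val = 0 := by
          rw [Fin.val_add_one, if_pos hlast]
        have hival : i.val = N - 1 := by
          rw [hlast, Fin.val_last]
          omega
        rw [hf]
        simp only [hval, hival]
        have h1 : N - 1 + 1 = N := by omega
        rw [h1, ← hm]
        rw [SimpleGraph.Walk.getVert_length]
        have := SimpleGraph.Walk.adj_getVert_succ c (by omega : 0 < c.length)
        simpa using this
      · have hval : ((i + 1 : Fin N)).val = i.val + 1 := by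
          rw [Fin.val_add_one, if_neg hlast]
        rw [hf]
        simp only [hval]
        refine SimpleGraph.Walk.adj_getVert_succ c ?_
        have hne : i.val ≠ N - 1 := by
          intro h
          exact hlast (Fin.ext (by rw [Fin.val_last]; omega))
        have h2 := i.isLt
        omega
    -- injectivity
    have hinj : Function.Injective f := by
      intro i j hij
      have htail : ∀ k : ℕ, k + 1 ≤ c.length → c.getVert (k+1) = c.tail.getVert k := by
        intro k _
        rw [SimpleGraph.Walk.getVert_tail c]
      have hlen : c.tail.length + 1 = c.length := SimpleGraph.Walk.length_tail_add_one hnotnil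
      have hnd : c.tail.support.Nodup := by
        rw [SimpleGraph.Walk.support_tail_of_not_nil c hnotnil]
        exact hc.support_nodup
      have h1 : c.tail.getVert i.val = c.tail.getVert j.val := by
        rw [← htail i.val (by omega), ← htail j.val (by omega)]
        exact hij
      have := getVert_injOn_path hnd i.val (by omega) j.val (by omega) h1
      exact Fin.ext this
    -- every support vertex is in range of f
    have hrange : ∀ y ∈ c.support, ∃ i, f i = y := by
      intro y hy
      obtain ⟨k, hk1, hk2⟩ := SimpleGraph.Walk.mem_support_iff_exists_getVert.1 hy
      by_cases hk0 : k = 0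
      · refine ⟨⟨N - 1, by omega⟩, ?_⟩
        rw [hf]
        simp only []
        have h1 : N - 1 + 1 = N := by omega
        rw [h1, ← hm, SimpleGraph.Walk.getVert_length]
        rw [← hk1, hk0, SimpleGraph.Walk.getVert_zero]
      · refine ⟨⟨k - 1, by omega⟩, ?_⟩
        rw [hf]
        simp only []
        have h1 : k - 1 + 1 = k := by omega
        rw [h1, hk1]
    -- mem support of f i
    have hmemf : ∀ i : Fin N, f i ∈ c.support := by
      intro i
      exact SimpleGraph.Walk.mem_support_iff_exists_getVert.2 ⟨i.val + 1, rfl, by omega⟩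
    -- two distinct
    have htwo : ∀ i : Fin N, (i : Fin N) - 1 ≠ i + 1 := by
      intro i h
      have h2 : (i + 1) - (i - 1) = 0 := by rw [← h]; abel
      have h3 : (i + 1) - (i - 1) = 2 := by abel
      rw [h3] at h2
      have := congrArg Fin.val h2
      simp at this
      rw [Nat.mod_eq_of_lt (by omega)] at this
      omega
    -- neighbor sets
    have hnbr : ∀ i : Fin N, G.neighborSet (f i) = {f (i - 1), f (i + 1)} := by
      intro i
      have hsub : {f (i-1), f (i+1)} ⊆ G.neighborSet (f i) := by
        intro z hz
        rcases hz with h | h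
        · subst h
          have := hadj (i - 1)
          rw [sub_add_cancel] at this
          exact this.symm
        · rw [Set.mem_singleton_iff] at h
          subst h
          exact hadj i
      have hcard2 : ({f (i-1), f (i+1)} : Set V).ncard = 2 := by
        rw [Set.ncard_pair]
        exact fun h => htwo i (hinj h)
      refine (Set.eq_of_subset_of_ncard_le hsub ?_ (Set.toFinite _)).symm
      rw [hcard2]
      have := hdeg (f i) (hmemf i)
      omega
    -- support closed under adjacency, hence everything is in the support
    have hclosed : ∀ a ∈ {w | w ∈ c.support}, ∀ b, G.Adj a b → b ∈ {w | w ∈ c.support} := by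
      intro a ha b hab
      obtain ⟨i, rfl⟩ := hrange a ha
      have : b ∈ G.neighborSet (f i) := hab
      rw [hnbr i] at this
      rcases this with h | h
      · subst h; exact hmemf _
      · rw [Set.mem_singleton_iff] at h; subst h; exact hmemf _
    have hall : ∀ y : V, y ∈ c.support := by
      intro y
      exact closed_adj_univ hconn {w | w ∈ c.support} (c.start_mem_support) hclosed y
    have hsurj : Function.Surjective f := by
      intro y
      exact hrange y (hall y)
    have hbij : Function.Bijective f := ⟨hinj, hsurj⟩
    -- the adjacency characterization
    have hiff : ∀ i j : Fin N, G.Adj (f i) (f j) ↔ (cycleGraph N).Adj i j := by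
      intro i j
      have hcyc : (cycleGraph N).Adj i j ↔ i - j = 1 ∨ j - i = 1 :=
        SimpleGraph.cycleGraph_adj (n := m + 1)
      constructor
      · intro h
        have : f j ∈ G.neighborSet (f i) := h
        rw [hnbr i] at this
        rw [hcyc]
        rcases this with h' | h'
        · have := hinj h'
          left
          rw [this]
          abel
        · rw [Set.mem_singleton_iff] at h'
          have := hinj h'
          right
          rw [this]
          abel
      · intro h
        rw [hcyc] at h
        rcases h with h | h
        · have hj : i = j + 1 := by
            rw [← h]; abel
          rw [hj]
          exact (hadj j).symm
        · have hj : j = i + 1 := by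
            rw [← h]; abel
          rw [hj]
          exact hadj i
    refine ⟨(Equiv.ofBijective f hbij).symm, ?_⟩
    intro a b
    obtain ⟨i, rfl⟩ := hsurj a
    obtain ⟨j, rfl⟩ := hsurj b
    have h1 : ∀ k : Fin N, (Equiv.ofBijective f hbij).symm (f k) = k := by
      intro k
      rw [Equiv.symm_apply_eq]
      rfl
    rw [h1 i, h1 j]
    exact (hiff i j).symm

lemma edgeSet_ncard_eq [Fintype V'] (G : SimpleGraph V') :
    G.edgeSet.ncard = G.edgeFinset.card := by
  rw [← Nat.card_coe_set_eq, Nat.card_eq_fintype_card, SimpleGraph.edgeFinset_card]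

theorem exists_small_forcing {V : Type*} [Fintype V] (G : SimpleGraph V)
    (hconn : G.Connected) (hcard : 2 ≤ Fintype.card V)
    (hnc : ¬ ∃ n : ℕ, Nonempty (G ≃g SimpleGraph.cycleGraph n)) :
    ∃ S : Set V, (∀ v, Forced G S v) ∧
      (S.ncard : ℤ) ≤ 2 * ((G.edgeSet.ncard : ℤ) - Fintype.card V + 1) +
        ({v : V | (G.neighborSet v).ncard = 1}).ncard - 1 := by
  classical
  by_cases hac : G.IsAcyclic
  · -- tree case
    have hT : G.IsTree := ⟨hconn, hac⟩
    have hE : (G.edgeSet.ncard : ℤ) = (Fintype.card V : ℤ) - 1 := by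
      have h1 := hT.card_edgeFinset
      have h2 := edgeSet_ncard_eq G
      push_cast [h2, ← h1]
      ring
    obtain ⟨ℓ, hℓ⟩ := exists_leaf hT hcard
    refine ⟨{v | (G.neighborSet v).ncard = 1} \ {ℓ}, ?_, ?_⟩
    · refine master_forcing G G le_rfl hT hcard _ ℓ ℓ ?_ ?_ ?_ ?_
      · exact fun y hy hne => ⟨hy, hne⟩
      · exact fun y z h1 h2 _ => absurd h1 h2
      · exact Or.inr (fun z h1 h2 => absurd h1 h2)
      · exact Or.inl rfl
    · have hp1 : 1 ≤ ({v : V | (G.neighborSet v).ncard = 1}).ncard :=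
        Set.ncard_pos (Set.toFinite _) |>.2 ⟨ℓ, hℓ⟩
      have hd := Set.ncard_diff_singleton_of_mem (s := {v : V | (G.neighborSet v).ncard = 1})
        (a := ℓ) hℓ
      rw [hd, hE]
      push_cast [Nat.cast_sub hp1]
      ring_nf
      omega
  · rcases good_edge_or_iso G hconn hac with ⟨a, b, hab, hbr, hdb⟩ | hiso
    swap
    · exact absurd hiso hnc
    set G' := G \ fromEdgeSet {s(a,b)} with hG'
    have hreach : G'.Reachable a b := by
      by_contra hre
      exact hbr hre
    have hconn' : G'.Connected := by
      rw [SimpleGraph.connected_iff]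
      refine ⟨?_, hconn.nonempty⟩
      intro x y
      obtain ⟨p⟩ := hconn.preconnected x y
      exact reachable_delete_edge G hreach p
    obtain ⟨T, hTle, hTree⟩ := exists_spanning_tree_aux G'.edgeSet.ncard G' le_rfl hconn'
    have hTG : T ≤ G := hTle.trans sdiff_le
    have hnoTab : ¬ T.Adj a b := by
      intro h
      have := hTle h
      rw [hG', SimpleGraph.sdiff_adj] at this
      exact this.2 (by rw [SimpleGraph.fromEdgeSet_adj]; exact ⟨rfl, hab.ne⟩)
    have hnoTba : ¬ T.Adj b a := fun h => hnoTab h.symm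
    set X := {x : V | ∃ z, G.Adj x z ∧ ¬ T.Adj x z} with hX
    set NT := G.edgeSet \ T.edgeSet with hNT
    have hTE : T.edgeSet ⊆ G.edgeSet := SimpleGraph.edgeSet_mono hTG
    have hnTab : s(a, b) ∈ NT := ⟨hab, fun h => hnoTab h⟩
    have hk1 : 1 ≤ NT.ncard := Set.ncard_pos (Set.toFinite _) |>.2 ⟨_, hnTab⟩
    have hkZ : (NT.ncard : ℤ) = (G.edgeSet.ncard : ℤ) - Fintype.card V + 1 := by
      have h1 : NT.ncard = G.edgeSet.ncard - T.edgeSet.ncard :=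
        Set.ncard_diff hTE (Set.toFinite _)
      have h2 : T.edgeSet.ncard ≤ G.edgeSet.ncard :=
        Set.ncard_le_ncard hTE (Set.toFinite _)
      have h3 : T.edgeSet.ncard + 1 = Fintype.card V := by
        rw [edgeSet_ncard_eq]; exact hTree.card_edgeFinset
      push_cast [h1, Nat.cast_sub h2]
      omega
    have hbX : b ∈ X := ⟨a, hab.symm, hnoTba⟩
    have haX : a ∈ X := ⟨b, hab, hnoTab⟩
    have hpend : {x : V | (T.neighborSet x).ncard = 1} \ X ⊆
        {v : V | (G.neighborSet v).ncard = 1} := by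
      intro v hv
      have heq : G.neighborSet v = T.neighborSet v := by
        apply Set.Subset.antisymm
        · intro z hz
          by_contra hTz
          exact hv.2 ⟨z, hz, hTz⟩
        · exact fun z hz => hTG hz
      have := hv.1
      simpa [heq] using this
    by_cases hb : ∀ z, G.Adj z b → ¬ T.Adj z b → z = a
    · -- single non-tree edge at b
      have hdegTb : 2 ≤ (T.neighborSet b).ncard := by
        have hsub : G.neighborSet b ⊆ insert a (T.neighborSet b) := by
          intro z hz
          by_cases hTz : T.Adj b z
          · exact Set.mem_insert_of_mem _ hTz
          · have : z = a := hb z (SimpleGraph.Adj.symm hz) (fun h => hTz h.symm)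
            rw [this]; exact Set.mem_insert _ _
        have h1 : (G.neighborSet b).ncard ≤ (insert a (T.neighborSet b)).ncard :=
          Set.ncard_le_ncard hsub (Set.toFinite _)
        have h2 := Set.ncard_insert_le a (T.neighborSet b)
        omega
      refine ⟨{x : V | (T.neighborSet x).ncard = 1} ∪ (X \ {b}), ?_, ?_⟩
      · refine master_forcing G T hTG hTree hcard _ a b ?_ ?_ ?_ ?_
        · exact fun y hy _ => Or.inl hy
        · exact fun y z h1 h2 hne => Or.inr ⟨⟨z, h1, h2⟩, hne⟩
        · exact Or.inr hb
        · exact Or.inr (Or.inl hdegTb)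
      · have hSsub : {x : V | (T.neighborSet x).ncard = 1} ∪ (X \ {b}) ⊆
            ({x : V | (T.neighborSet x).ncard = 1} \ X) ∪ (X \ {b}) := by
          intro v hv
          rcases hv with hv | hv
          · by_cases hvX : v ∈ X
            · right
              refine ⟨hvX, ?_⟩
              intro hvb
              rw [Set.mem_singleton_iff] at hvb
              subst hvb
              rw [Set.mem_setOf_eq] at hv
              omega
            · left; exact ⟨hv, hvX⟩
          · right; exact hv
        have h1 : ({x : V | (T.neighborSet x).ncard = 1} ∪ (X \ {b})).ncard ≤
            ({x : V | (T.neighborSet x).ncard = 1} \ X).ncard + (X \ {b}).ncard :=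
          (Set.ncard_le_ncard hSsub (Set.toFinite _)).trans (Set.ncard_union_le _ _)
        have h2 : ({x : V | (T.neighborSet x).ncard = 1} \ X).ncard ≤
            ({v : V | (G.neighborSet v).ncard = 1}).ncard :=
          Set.ncard_le_ncard hpend (Set.toFinite _)
        have h3 : (X \ {b}).ncard = X.ncard - 1 :=
          Set.ncard_diff_singleton_of_mem hbX
        have h4 : 1 ≤ X.ncard := Set.ncard_pos (Set.toFinite _) |>.2 ⟨b, hbX⟩
        have h5 : X.ncard ≤ 2 * NT.ncard := ncard_X_le G T
        rw [← hkZ]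
        have : ({x : V | (T.neighborSet x).ncard = 1} ∪ (X \ {b})).ncard ≤
            ({v : V | (G.neighborSet v).ncard = 1}).ncard + 2 * NT.ncard - 1 := by omega
        have hge : 1 ≤ ({v : V | (G.neighborSet v).ncard = 1}).ncard + 2 * NT.ncard := by omega
        push_cast [Nat.cast_sub hge] at this ⊢
        omega
    · -- two non-tree edges at b
      push_neg at hb
      obtain ⟨z, hz1, hz2, hz3⟩ := hb
      have hnTzb : s(z, b) ∈ NT := ⟨hz1, fun h => hz2 h⟩
      have hne : s(a, b) ≠ s(z, b) := by
        intro h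
        rw [Sym2.eq_iff] at h
        rcases h with ⟨h1, h2⟩ | ⟨h1, h2⟩
        · exact hz3 h1.symm
        · exact G.ne_of_adj hab h1
      refine ⟨{x : V | (T.neighborSet x).ncard = 1} ∪ X, ?_, ?_⟩
      · refine master_forcing G T hTG hTree hcard _ b b ?_ ?_ ?_ ?_
        · exact fun y hy _ => Or.inl hy
        · exact fun y z' h1 h2 _ => Or.inr ⟨z', h1, h2⟩
        · exact Or.inl (Or.inr hbX)
        · exact Or.inr (Or.inr (Or.inr hbX))
      · have hSsub : {x : V | (T.neighborSet x).ncard = 1} ∪ X ⊆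
            ({x : V | (T.neighborSet x).ncard = 1} \ X) ∪ X := by
          intro v hv
          rcases hv with hv | hv
          · by_cases hvX : v ∈ X
            · right; exact hvX
            · left; exact ⟨hv, hvX⟩
          · right; exact hv
        have h1 : ({x : V | (T.neighborSet x).ncard = 1} ∪ X).ncard ≤
            ({x : V | (T.neighborSet x).ncard = 1} \ X).ncard + X.ncard :=
          (Set.ncard_le_ncard hSsub (Set.toFinite _)).trans (Set.ncard_union_le _ _)
        have h2 : ({x : V | (T.neighborSet x).ncard = 1} \ X).ncard ≤
            ({v : V | (G.neighborSet v).ncard = 1}).ncard :=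
          Set.ncard_le_ncard hpend (Set.toFinite _)
        have h5 : X.ncard + 1 ≤ 2 * NT.ncard := ncard_X_le_sharp G T hnTab hnTzb hne
        rw [← hkZ]
        omega

end Aux

/-- Theorem 1.1 (Wang et al.): for a connected graph `G` which is not a cycle,
`m(G, lam) ≤ 2 c(G) + p(G) - 1`. -/
theorem stmt18 {V : Type*} [Fintype V] (G : SimpleGraph V) (hconn : G.Connected)
    (hcard : 2 ≤ Fintype.card V)
    (hnc : ¬ ∃ n : ℕ, Nonempty (G ≃g SimpleGraph.cycleGraph n)) (lam : ℝ) :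
    (gMult G lam : ℤ) ≤
      2 * ((G.edgeSet.ncard : ℤ) - Fintype.card V + 1) + pendCount G - 1 := by
  obtain ⟨S, hS, hbound⟩ := exists_small_forcing G hconn hcard hnc
  have h1 : gMult G lam ≤ S.ncard := gMult_le_forcing G S hS lam
  have h2 : (gMult G lam : ℤ) ≤ (S.ncard : ℤ) := by exact_mod_cast h1
  have h3 : pendCount G = ({v : V | (G.neighborSet v).ncard = 1}).ncard := rfl
  rw [h3]
  exact h2.trans hbound
end

section
/- Let T be a tree with exactly 3 pendant vertices and unique major vertex w, so T - w = T_1 ∪ T_2 ∪ T_3 with each T_i a path and the neighbor u_i of w in T_i an endpoint of T_i. Let λ be an eigenvalue of T. Then m(T, λ) = 1 if and only if either (a) m(T_i, λ) = 0 for all i = 1, 2, 3, or (b) exactly one T_i has m(T_i, λ) = 0 and the other two have m(T_j, λ) = 1. -/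
open scoped Classical

set_option linter.unusedSectionVars false
open Matrix
namespace Spider

section helpers
variable {ι : Type*} [Fintype ι] (x : ι → ℝ)

lemma sum_ite_none (P : ι → Prop) (hP : ∀ u, ¬ P u) :
    (∑ u, if P u then x u else 0) = 0 :=
  Finset.sum_eq_zero (fun u _ => by simp [hP u])

lemma sum_ite_single (a : ι) (P : ι → Prop) (hP : ∀ u, P u ↔ u = a) :
    (∑ u, if P u then x u else 0) = x a := by
  rw [Finset.sum_congr rfl (fun u _ => by
    rw [show (if P u then x u else 0) = if u = a then x u else 0 by simp [hP u]])]
  rw [Finset.sum_ite_eq' Finset.univ]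
  simp

lemma sum_ite_pair (a b : ι) (hab : a ≠ b) (P : ι → Prop) (hP : ∀ u, P u ↔ (u = a ∨ u = b)) :
    (∑ u, if P u then x u else 0) = x a + x b := by
  have step : ∀ u, (if P u then x u else 0)
      = (if u = a then x u else 0) + (if u = b then x u else 0) := by
    intro u
    by_cases h1 : u = a
    · subst h1; simp [hP, hab]
    · by_cases h2 : u = b
      · subst h2; simp [hP, h1]
      · simp [hP, h1, h2]
  rw [Finset.sum_congr rfl (fun u _ => step u), Finset.sum_add_distrib,
    Finset.sum_ite_eq' Finset.univ, Finset.sum_ite_eq' Finset.univ]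
  simp
end helpers

section Structural

variable {V : Type*} [Fintype V] (T : SimpleGraph V) (w : V)

lemma mem_compSupp {c : (T.induce {u | u ≠ w}).ConnectedComponent} {v : V} :
    v ∈ compSupp T w c ↔
      ∃ h : v ≠ w, (T.induce {u | u ≠ w}).connectedComponentMk ⟨v, h⟩ = c := by
  constructor
  · rintro ⟨⟨u, hu⟩, hmem, rfl⟩
    exact ⟨hu, (SimpleGraph.ConnectedComponent.mem_supp_iff _ _).1 hmem⟩
  · rintro ⟨h, hc⟩
    exact ⟨⟨v, h⟩, (SimpleGraph.ConnectedComponent.mem_supp_iff _ _).2 hc, rfl⟩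

lemma not_w_mem_compSupp {c : (T.induce {u | u ≠ w}).ConnectedComponent} :
    w ∉ compSupp T w c := by
  rw [mem_compSupp]
  rintro ⟨h, -⟩
  exact h rfl

lemma compSupp_disjoint {c c' : (T.induce {u | u ≠ w}).ConnectedComponent} {v : V}
    (h : v ∈ compSupp T w c) (h' : v ∈ compSupp T w c') : c = c' := by
  rw [mem_compSupp] at h h'
  obtain ⟨hv, rfl⟩ := h
  obtain ⟨hv', rfl⟩ := h'
  rfl

lemma mem_compSupp_self {v : V} (h : v ≠ w) :
    v ∈ compSupp T w ((T.induce {u | u ≠ w}).connectedComponentMk ⟨v, h⟩) :=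
  (mem_compSupp T w).2 ⟨h, rfl⟩

lemma compSupp_adj_closed {c : (T.induce {u | u ≠ w}).ConnectedComponent} {v v' : V}
    (hv : v ∈ compSupp T w c) (hadj : T.Adj v v') (hv' : v' ≠ w) :
    v' ∈ compSupp T w c := by
  rw [mem_compSupp] at hv ⊢
  obtain ⟨h, rfl⟩ := hv
  refine ⟨hv', ?_⟩
  exact SimpleGraph.ConnectedComponent.connectedComponentMk_eq_of_adj
    (by exact hadj.symm : (T.induce {u | u ≠ w}).Adj ⟨v', hv'⟩ ⟨v, h⟩)

/-- A walk in `T` avoiding `w` yields reachability in the induced graph. -/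
lemma reachable_of_walk_avoid {a b : V} (p : T.Walk a b) (hp : ∀ x ∈ p.support, x ≠ w) :
    (T.induce {u | u ≠ w}).Reachable
      ⟨a, hp a p.start_mem_support⟩ ⟨b, hp b p.end_mem_support⟩ := by
  induction p with
  | nil => rfl
  | @cons a a' b hadj q ih =>
    have ha : a ≠ w := hp a (by simp)
    have ha' : a' ≠ w := hp a' (by simp)
    have hq : ∀ x ∈ q.support, x ≠ w := fun x hx => hp x (by simp [hx])
    exact (SimpleGraph.Adj.reachable
      (by exact hadj : (T.induce {u | u ≠ w}).Adj ⟨a, ha⟩ ⟨a', ha'⟩)).trans (ih hq)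

/-- Reachability in the induced graph yields a path in `T` avoiding `w`. -/
lemma walk_avoid_of_reachable {a b : V} (ha : a ≠ w) (hb : b ≠ w)
    (h : (T.induce {u | u ≠ w}).Reachable ⟨a, ha⟩ ⟨b, hb⟩) :
    ∃ p : T.Walk a b, p.IsPath ∧ w ∉ p.support := by
  obtain ⟨q⟩ := h
  let q' : T.Walk a b := q.map (SimpleGraph.Embedding.induce {u : V | u ≠ w}).toHom
  have hsupp : w ∉ q'.support := by
    rw [show q'.support = (q.map (SimpleGraph.Embedding.induce {u : V | u ≠ w}).toHom).support from rfl,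
      SimpleGraph.Walk.support_map]
    intro hc
    rw [List.mem_map] at hc
    obtain ⟨⟨x, hx⟩, -, hx2⟩ := hc
    exact hx hx2
  refine ⟨q'.toPath, q'.toPath.2, fun hc => hsupp ?_⟩
  exact SimpleGraph.Walk.support_toPath_subset q' hc

/-- Every component of `T - w` contains exactly one neighbor of `w`. -/
lemma attach_existsUnique (hT : T.IsTree) (c : (T.induce {u | u ≠ w}).ConnectedComponent) :
    ∃! u : V, u ∈ compSupp T w c ∧ T.Adj w u := by
  obtain ⟨⟨v₀, hv₀⟩, hv₀c⟩ : ∃ x, (T.induce {u | u ≠ w}).connectedComponentMk x = c :=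
    Quot.exists_rep c
  -- existence
  have hex : ∃ u : V, u ∈ compSupp T w c ∧ T.Adj w u := by
    obtain ⟨p0⟩ := hT.isConnected.preconnected v₀ w
    have hp : (p0.toPath : T.Walk v₀ w).IsPath := p0.toPath.2
    set q : T.Walk w v₀ := (p0.toPath : T.Walk v₀ w).reverse with hq
    have hqp : q.IsPath := hp.reverse
    obtain ⟨u, hadj, q', hq'⟩ := SimpleGraph.Walk.exists_eq_cons_of_ne (Ne.symm hv₀) q
    have hwq' : w ∉ q'.support := by
      have := hqp.support_nodup
      rw [hq', SimpleGraph.Walk.support_cons] at this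
      exact (List.nodup_cons.1 this).1
    have hsup : ∀ x ∈ q'.support, x ≠ w := fun x hx hxw => hwq' (hxw ▸ hx)
    have hreach := reachable_of_walk_avoid T w q' hsup
    have hu : u ≠ w := hsup u q'.start_mem_support
    refine ⟨u, ?_, hadj⟩
    rw [mem_compSupp]
    refine ⟨hu, ?_⟩
    rw [← hv₀c]
    exact SimpleGraph.ConnectedComponent.sound (by exact_mod_cast hreach)
  obtain ⟨u, hu⟩ := hex
  refine ⟨u, hu, fun u' hu' => ?_⟩
  by_contra hne
  -- two distinct neighbors of w in same component: contradiction with tree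
  obtain ⟨hmem', hadj'⟩ := hu'
  obtain ⟨hmem, hadj⟩ := hu
  rw [mem_compSupp] at hmem hmem'
  obtain ⟨hu_ne, hcu⟩ := hmem
  obtain ⟨hu'_ne, hcu'⟩ := hmem'
  have hreach : (T.induce {u | u ≠ w}).Reachable ⟨u', hu'_ne⟩ ⟨u, hu_ne⟩ :=
    SimpleGraph.ConnectedComponent.exact (hcu'.trans hcu.symm)
  obtain ⟨p, hp, hwp⟩ := walk_avoid_of_reachable T w hu'_ne hu_ne hreach
  set p2 : T.Walk u' u := SimpleGraph.Walk.cons hadj'.symm (SimpleGraph.Walk.cons hadj .nil)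
    with hp2def
  have hp2 : p2.IsPath := by
    rw [hp2def]
    apply SimpleGraph.Walk.IsPath.cons
    · apply SimpleGraph.Walk.IsPath.cons (SimpleGraph.Walk.IsPath.nil)
      simp [Ne.symm hu_ne]
    · simp [hne, hu'_ne]
  have huniq := hT.existsUnique_path u' u
  obtain ⟨pp, -, hppuniq⟩ := huniq
  have h1 : p = p2 := (hppuniq p hp).trans (hppuniq p2 hp2).symm
  apply hwp
  rw [h1, hp2def]
  simp

/-- The chosen attachment vertex of a component. -/
noncomputable def att (hT : T.IsTree) (c : (T.induce {u | u ≠ w}).ConnectedComponent) : V :=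
  (attach_existsUnique T w hT c).exists.choose

lemma att_mem (hT : T.IsTree) (c : (T.induce {u | u ≠ w}).ConnectedComponent) :
    att T w hT c ∈ compSupp T w c ∧ T.Adj w (att T w hT c) :=
  (attach_existsUnique T w hT c).exists.choose_spec

lemma att_unique (hT : T.IsTree) {c : (T.induce {u | u ≠ w}).ConnectedComponent} {u : V}
    (h : u ∈ compSupp T w c ∧ T.Adj w u) : u = att T w hT c := by
  obtain ⟨z, hz, hzuniq⟩ := attach_existsUnique T w hT c
  rw [hzuniq u h, hzuniq (att T w hT c) (att_mem T w hT c)]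

/-- The components are in bijection with the neighbors of `w`. -/
lemma card_components (hT : T.IsTree) :
    Nat.card (T.induce {u | u ≠ w}).ConnectedComponent = deg T w := by
  have hbij : Function.Bijective
      (fun c : (T.induce {u | u ≠ w}).ConnectedComponent =>
        (⟨att T w hT c, (att_mem T w hT c).2⟩ : T.neighborSet w)) := by
    constructor
    · intro c c' h
      simp only [Subtype.mk.injEq] at h
      exact compSupp_disjoint T w (att_mem T w hT c).1 (by
        have h' : att T w hT c = att T w hT c' := congrArg Subtype.val h
        exact h' ▸ (att_mem T w hT c').1)
    · rintro ⟨u, hu⟩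
      rw [SimpleGraph.mem_neighborSet] at hu
      have hune : u ≠ w := fun h => T.loopless.irrefl w (h ▸ hu)
      refine ⟨(T.induce {u | u ≠ w}).connectedComponentMk ⟨u, hune⟩, ?_⟩
      simp only [Subtype.mk.injEq]
      exact Subtype.ext (att_unique T w hT ⟨mem_compSupp_self T w hune, hu⟩).symm
  rw [Nat.card_eq_of_bijective _ hbij, deg, ← Nat.card_coe_set_eq]

end Structural

section PG
variable {n : ℕ} (lam : ℝ) (x : Fin n → ℝ)

noncomputable def yext (n : ℕ) (x : Fin n → ℝ) : ℕ → ℝ :=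
  fun m => if h : m < n then x ⟨m, h⟩ else 0

lemma pg_key
    (hker : ∀ v, (∑ u, if (SimpleGraph.pathGraph n).Adj v u then x u else 0) = lam * x v)
    (m : ℕ) (hm : m < n) :
    (if m = 0 then 0 else yext n x (m-1)) + yext n x (m+1) = lam * yext n x m := by
  have h0 := hker ⟨m, hm⟩
  have hy : yext n x m = x ⟨m, hm⟩ := by simp [yext, hm]
  rw [hy, ← h0]
  rcases Nat.eq_zero_or_pos m with rfl | hm1
  · rw [if_pos rfl, zero_add]
    by_cases h1 : 1 < n
    · rw [sum_ite_single x ⟨1, h1⟩ _ (fun u => by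
        rw [SimpleGraph.pathGraph_adj]; simp [Fin.ext_iff]; omega)]
      simp [yext, h1]
    · rw [sum_ite_none x _ (fun u => by
        rw [SimpleGraph.pathGraph_adj]; have := u.isLt; simp; omega)]
      simp only [yext]
      rw [dif_neg (by omega)]
  · rw [if_neg (by omega)]
    by_cases h1 : m + 1 < n
    · rw [sum_ite_pair x ⟨m-1, by omega⟩ ⟨m+1, h1⟩
        (by simp only [ne_eq, Fin.mk.injEq]; omega)
        _ (fun u => by rw [SimpleGraph.pathGraph_adj]; simp [Fin.ext_iff]; omega)]
      simp only [yext]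
      rw [dif_pos (show m - 1 < n by omega), dif_pos h1]
    · rw [sum_ite_single x ⟨m-1, by omega⟩ _ (fun u => by
        rw [SimpleGraph.pathGraph_adj]; have := u.isLt; simp [Fin.ext_iff]; omega)]
      simp only [yext]
      rw [dif_pos (show m - 1 < n by omega), dif_neg h1]
      ring
end PG

section PG2
variable {n : ℕ} {lam : ℝ} {x : Fin n → ℝ}

lemma pg_zero_first
    (hker : ∀ v, (∑ u, if (SimpleGraph.pathGraph n).Adj v u then x u else 0) = lam * x v)
    (h0 : yext n x 0 = 0) : ∀ m, yext n x m = 0 := by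
  intro m
  induction m using Nat.strong_induction_on with
  | _ m ih =>
    match m with
    | 0 => exact h0
    | 1 =>
      by_cases h1 : 1 < n
      · have := pg_key lam x hker 0 (by omega)
        rw [if_pos rfl, h0, zero_add] at this
        simpa using this
      · simp [yext]; omega
    | (k+2) =>
      by_cases h1 : k + 2 < n
      · have := pg_key lam x hker (k+1) (by omega)
        rw [if_neg (by omega), Nat.add_sub_cancel, ih k (by omega), ih (k+1) (by omega), zero_add] at this
        simpa using this
      · simp only [yext]; rw [dif_neg (by omega)]

lemma pg_zero_last
    (hker : ∀ v, (∑ u, if (SimpleGraph.pathGraph n).Adj v u then x u else 0) = lam * x v)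
    (hl : yext n x (n-1) = 0) : ∀ m, yext n x m = 0 := by
  have key : ∀ j, ∀ m, m + j = n - 1 → yext n x m = 0 := by
    intro j
    induction j using Nat.strong_induction_on with
    | _ j ih =>
      match j with
      | 0 => intro m hm; rw [show m = n - 1 by omega]; exact hl
      | 1 =>
        intro m hm
        have hn : 2 ≤ n := by omega
        have := pg_key lam x hker (m+1) (by omega)
        rw [if_neg (by omega), Nat.add_sub_cancel,
          show m + 1 + 1 = n by omega,
          show yext n x n = 0 by simp only [yext]; rw [dif_neg (by omega)],
          show yext n x (m+1) = yext n x (n-1) by rw [show m + 1 = n - 1 by omega],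
          hl, add_zero, mul_zero] at this
        exact this
      | (j+2) =>
        intro m hm
        have := pg_key lam x hker (m+1) (by omega)
        rw [if_neg (by omega), Nat.add_sub_cancel,
          ih (j+1) (by omega) (m+1) (by omega),
          ih j (by omega) (m+2) (by omega), add_zero, mul_zero] at this
        exact this
  intro m
  by_cases h : m < n
  · exact key (n - 1 - m) m (by omega)
  · simp only [yext]; rw [dif_neg h]

lemma pg_endpoint_ker
    (hker : ∀ v, (∑ u, if (SimpleGraph.pathGraph n).Adj v u then x u else 0) = lam * x v)
    (k : Fin n) (hdeg : ((SimpleGraph.pathGraph n).neighborSet k).ncard ≤ 1)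
    (hxk : x k = 0) : x = 0 := by
  have hk : k.val = 0 ∨ k.val = n - 1 := by
    by_contra hc
    push_neg at hc
    have hk1 : 0 < k.val := Nat.pos_of_ne_zero hc.1
    have hk2 : k.val < n - 1 := by have := k.isLt; omega
    set a : Fin n := ⟨k.val - 1, by omega⟩
    set b : Fin n := ⟨k.val + 1, by omega⟩
    have hab : a ≠ b := by simp only [a, b, ne_eq, Fin.mk.injEq]; omega
    have hsub : ({a, b} : Set (Fin n)) ⊆ (SimpleGraph.pathGraph n).neighborSet k := by
      intro u hu
      rcases hu with rfl | hu
      · rw [SimpleGraph.mem_neighborSet, SimpleGraph.pathGraph_adj]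
        right; simp [a]; omega
      · rw [Set.mem_singleton_iff] at hu
        subst hu
        rw [SimpleGraph.mem_neighborSet, SimpleGraph.pathGraph_adj]
        left; simp [b]
    have h2 : 2 ≤ ((SimpleGraph.pathGraph n).neighborSet k).ncard := by
      rw [← Set.ncard_pair hab]
      exact Set.ncard_le_ncard hsub (Set.toFinite _)
    omega
  have hall : ∀ m, yext n x m = 0 := by
    rcases hk with hk | hk
    · refine pg_zero_first hker ?_
      simp only [yext]
      rw [dif_pos (by omega : (0:ℕ) < n)]
      rw [show (⟨0, by omega⟩ : Fin n) = k by simp [Fin.ext_iff, hk.symm]]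
      exact hxk
    · refine pg_zero_last hker ?_
      simp only [yext]
      rw [dif_pos (by omega : n - 1 < n)]
      rw [show (⟨n-1, by omega⟩ : Fin n) = k by simp [Fin.ext_iff, hk.symm]]
      exact hxk
  funext v
  have := hall v.val
  simp only [yext] at this
  rw [dif_pos v.isLt] at this
  simpa using this


end PG2

section Generic
variable {W : Type*} [Fintype W]

lemma ker_toLin'_eq [DecidableEq W] (M : Matrix W W ℝ) :
    LinearMap.ker (Matrix.toLin' M) = LinearMap.ker M.mulVecLin := by
  have : Matrix.toLin' M = M.mulVecLin := by
    apply LinearMap.ext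
    intro x
    rw [Matrix.toLin'_apply, Matrix.mulVecLin_apply]
  rw [this]

lemma gMult_eq [DecidableEq W] (G : SimpleGraph W) (lam : ℝ) :
    gMult G lam = Module.finrank ℝ
      (LinearMap.ker (adjM G - lam • (1 : Matrix W W ℝ)).mulVecLin) := by
  unfold gMult matMult
  rw [@ker_toLin'_eq W _ (fun a b => Classical.propDecidable (a = b))]
  congr!

lemma sMult_eq {V : Type*} [Fintype V] (G : SimpleGraph V) (s : Set V) (lam : ℝ) :
    sMult G s lam = Module.finrank ℝ
      (LinearMap.ker (adjM (G.induce s) - lam • (1 : Matrix s s ℝ)).mulVecLin) := by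
  unfold sMult
  rw [gMult_eq]

lemma mulVec_apply' [DecidableEq W] (G : SimpleGraph W) (lam : ℝ) (x : W → ℝ) (v : W) :
    ((adjM G - lam • (1 : Matrix W W ℝ)).mulVec x) v
      = (∑ u, if G.Adj v u then x u else 0) - lam * x v := by
  classical
  simp only [Matrix.mulVec, dotProduct, Matrix.sub_apply, Matrix.smul_apply,
    Matrix.one_apply, adjM, sub_mul, Finset.sum_sub_distrib, smul_eq_mul, mul_ite, mul_one,
    mul_zero, ite_mul, one_mul, zero_mul]
  rw [Finset.sum_ite_eq Finset.univ v (fun u => lam * x u)]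
  simp

lemma mem_ker_iff [DecidableEq W] (G : SimpleGraph W) (lam : ℝ) (x : W → ℝ) :
    x ∈ LinearMap.ker (adjM G - lam • (1 : Matrix W W ℝ)).mulVecLin
      ↔ ∀ v, (∑ u, if G.Adj v u then x u else 0) = lam * x v := by
  rw [LinearMap.mem_ker, Matrix.mulVecLin_apply]
  constructor
  · intro h v
    have := congrFun h v
    rw [mulVec_apply'] at this
    simpa [sub_eq_zero] using this
  · intro h
    funext v
    rw [mulVec_apply']
    simp [h v, sub_eq_zero]

/-- Transport a kernel condition along a graph isomorphism. -/
lemma iso_ker_transport {W' : Type*} [Fintype W'] {G : SimpleGraph W} {H : SimpleGraph W'}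
    (e : G ≃g H) {lam : ℝ} {x : W → ℝ}
    (hker : ∀ v, (∑ u, if G.Adj v u then x u else 0) = lam * x v) :
    ∀ v', (∑ u', if H.Adj v' u' then x (e.symm u') else 0) = lam * x (e.symm v') := by
  intro v'
  rw [← Equiv.sum_comp e.toEquiv (fun u' => if H.Adj v' u' then x (e.symm u') else 0)]
  have : ∀ u, (if H.Adj v' (e.toEquiv u) then x (e.symm (e.toEquiv u)) else 0)
      = if G.Adj (e.symm v') u then x u else 0 := by
    intro u
    have h1 : x (e.symm (e.toEquiv u)) = x u := by simp
    have h2 : H.Adj v' (e.toEquiv u) ↔ G.Adj (e.symm v') u := by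
      conv_lhs => rw [show v' = e (e.symm v') by simp]
      exact e.map_adj_iff
    rw [h1]
    by_cases h : G.Adj (e.symm v') u
    · rw [if_pos (h2.2 h), if_pos h]
    · rw [if_neg (fun hc => h (h2.1 hc)), if_neg h]
  rw [Finset.sum_congr rfl (fun u _ => this u)]
  exact hker (e.symm v')

/-- Degree is preserved by isomorphisms. -/
lemma iso_degree {W' : Type*} {G : SimpleGraph W} {H : SimpleGraph W'}
    (e : G ≃g H) (v : W) :
    (H.neighborSet (e v)).ncard = (G.neighborSet v).ncard := by
  rw [← Nat.card_coe_set_eq, ← Nat.card_coe_set_eq]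
  exact Nat.card_congr (e.mapNeighborSet v).symm

/-- Kernel vector of a path graph vanishing at a vertex of degree ≤ 1 is zero. -/
lemma ker_eval_endpoint {H : SimpleGraph W} (hpath : IsPathGraph H) {lam : ℝ} {φ : W → ℝ}
    (hker : ∀ v, (∑ u, if H.Adj v u then φ u else 0) = lam * φ v)
    (k : W) (hdeg : (H.neighborSet k).ncard ≤ 1) (hφk : φ k = 0) : φ = 0 := by
  obtain ⟨n, ⟨e⟩⟩ := hpath
  have hker' := iso_ker_transport e hker
  have hdeg' : ((SimpleGraph.pathGraph n).neighborSet (e k)).ncard ≤ 1 := by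
    rw [iso_degree e k]; exact hdeg
  have hx : (fun u' => φ (e.symm u')) = 0 := by
    apply pg_endpoint_ker hker' (e k) hdeg'
    simp [hφk]
  funext v
  have := congrFun hx (e v)
  simpa using this

lemma finrank_le_one_of_eval (M : Submodule ℝ (W → ℝ)) (k : W)
    (h : ∀ x ∈ M, x k = 0 → x = 0) : Module.finrank ℝ M ≤ 1 := by
  have hinj : Function.Injective ((LinearMap.proj k : (W → ℝ) →ₗ[ℝ] ℝ).comp M.subtype) := by
    intro a b hab
    simp only [LinearMap.comp_apply, LinearMap.proj_apply, Submodule.subtype_apply] at hab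
    have hmem : (↑a - ↑b : W → ℝ) ∈ M := M.sub_mem a.2 b.2
    have : (↑a - ↑b : W → ℝ) = 0 := h _ hmem (by simp [hab])
    exact Subtype.ext (by rwa [sub_eq_zero] at this)
  calc Module.finrank ℝ M ≤ Module.finrank ℝ ℝ :=
        LinearMap.finrank_le_finrank_of_injective hinj
    _ = 1 := Module.finrank_self ℝ

end Generic

section Main
variable {V : Type*} [Fintype V] (T : SimpleGraph V) (w : V) (lam : ℝ)

lemma sum_subtype_adj (s : Set V) (v : V) (x : V → ℝ)
    (h : ∀ u, T.Adj v u → u ∉ s → x u = 0) :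
    (∑ u : s, if T.Adj v ↑u then x ↑u else 0) = ∑ u : V, if T.Adj v u then x u else 0 := by
  classical
  have step : ∀ u : V, (if T.Adj v u then x u else 0)
      = if u ∈ s.toFinset then (if T.Adj v u then x u else 0) else 0 := by
    intro u
    by_cases hu : u ∈ s.toFinset
    · rw [if_pos hu]
    · rw [if_neg hu]
      by_cases ha : T.Adj v u
      · rw [if_pos ha, h u ha (by simpa using hu)]
      · rw [if_neg ha]
  rw [Finset.sum_congr rfl (fun u _ => step u), Finset.sum_ite_mem, Finset.univ_inter]
  exact (Finset.sum_subtype s.toFinset (fun u => Set.mem_toFinset)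
    (fun u => if T.Adj v u then x u else 0)).symm

/-- Kernel membership for an induced subgraph, in terms of `T.Adj`. -/
lemma mem_kerC_iff (s : Set V) (φ : s → ℝ) :
    φ ∈ LinearMap.ker (adjM (T.induce s) - lam • (1 : Matrix s s ℝ)).mulVecLin
      ↔ ∀ v : s, (∑ u : s, if T.Adj ↑v ↑u then φ u else 0) = lam * φ v := by
  rw [mem_ker_iff]
  constructor
  · intro h v
    have hv := h v
    convert hv using 3
    exact Iff.rfl
  · intro h v
    convert h v using 3
    exact Iff.rfl

/-- Restriction of a kernel vector vanishing at `w` to a component. -/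
lemma restrict_mem_ker (c : (T.induce {u | u ≠ w}).ConnectedComponent) (x : V → ℝ)
    (hx : x ∈ LinearMap.ker (adjM T - lam • (1 : Matrix V V ℝ)).mulVecLin)
    (hw0 : x w = 0) :
    (fun u : compSupp T w c => x ↑u) ∈ LinearMap.ker
      (adjM (T.induce (compSupp T w c)) - lam • 1).mulVecLin := by
  have hx' := (mem_ker_iff T lam x).1 hx
  rw [mem_kerC_iff]
  intro v
  have hout : ∀ u, T.Adj (↑v) u → u ∉ compSupp T w c → x u = 0 := by
    intro u hu hunot
    by_cases huw : u = w
    · rw [huw]; exact hw0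
    · exact absurd (compSupp_adj_closed T w v.2 hu huw) hunot
  rw [sum_subtype_adj T (compSupp T w c) ↑v x hout]
  exact hx' ↑v

/-- Extension of a component vector by zero. -/
noncomputable def extC (c : (T.induce {u | u ≠ w}).ConnectedComponent)
    (φ : compSupp T w c → ℝ) : V → ℝ :=
  fun v => if h : v ∈ compSupp T w c then φ ⟨v, h⟩ else 0

lemma extC_rows (hT : T.IsTree) (c : (T.induce {u | u ≠ w}).ConnectedComponent)
    (φ : compSupp T w c → ℝ)
    (hφ : φ ∈ LinearMap.ker (adjM (T.induce (compSupp T w c)) - lam • 1).mulVecLin) :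
    (adjM T - lam • (1 : Matrix V V ℝ)).mulVec (extC T w c φ)
      = fun v => if v = w then φ ⟨att T w hT c, (att_mem T w hT c).1⟩ else 0 := by
  rw [mem_kerC_iff] at hφ
  funext v
  rw [mulVec_apply']
  by_cases hvw : v = w
  · rw [hvw]
    rw [if_pos rfl]
    have hv0 : extC T w c φ w = 0 := dif_neg (not_w_mem_compSupp T w)
    rw [hv0, mul_zero, sub_zero]
    rw [Finset.sum_eq_single (att T w hT c)]
    · rw [if_pos (att_mem T w hT c).2]
      exact dif_pos (att_mem T w hT c).1
    · intro u _ hu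
      by_cases ha : T.Adj w u
      · rw [if_pos ha]
        by_cases hmem : u ∈ compSupp T w c
        · exact absurd (att_unique T w hT ⟨hmem, ha⟩) hu
        · exact dif_neg hmem
      · rw [if_neg ha]
    · intro hc; exact absurd (Finset.mem_univ _) hc
  · rw [if_neg hvw]
    by_cases hv : v ∈ compSupp T w c
    · have hvval : extC T w c φ v = φ ⟨v, hv⟩ := dif_pos hv
      rw [hvval]
      rw [← sum_subtype_adj T (compSupp T w c) v (extC T w c φ)
        (fun u _ hunot => dif_neg hunot)]
      have hrow := hφ ⟨v, hv⟩
      rw [Finset.sum_congr rfl (fun (u : compSupp T w c) _ => by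
        rw [show (if T.Adj v ↑u then extC T w c φ ↑u else 0)
            = if T.Adj (↑(⟨v, hv⟩ : compSupp T w c)) ↑u then φ u else 0 by
          by_cases ha : T.Adj v (↑u : V)
          · rw [if_pos ha, if_pos ha, extC, dif_pos u.2, Subtype.coe_eta]
          · rw [if_neg ha, if_neg ha]])]
      rw [hrow]
      ring
    · have hvval : extC T w c φ v = 0 := dif_neg hv
      rw [hvval, mul_zero, sub_zero]
      apply Finset.sum_eq_zero
      intro u _
      by_cases ha : T.Adj v u
      · rw [if_pos ha]
        by_cases hmem : u ∈ compSupp T w c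
        · exact absurd (compSupp_adj_closed T w hmem ha.symm hvw) hv
        · exact dif_neg hmem
      · rw [if_neg ha]

lemma M_symm : Matrix.transpose (adjM T - lam • (1 : Matrix V V ℝ)) = adjM T - lam • 1 := by
  ext i j
  simp only [Matrix.transpose_apply, Matrix.sub_apply, Matrix.smul_apply, Matrix.one_apply,
    adjM, smul_eq_mul]
  rw [SimpleGraph.adj_comm]
  congr 1
  by_cases h : j = i
  · subst h; rfl
  · rw [if_neg h, if_neg (Ne.symm h)]

/-- If some component supports a kernel vector with nonzero attachment value,
then every global kernel vector vanishes at `w`. -/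
lemma eval_w_zero (hT : T.IsTree) (c : (T.induce {u | u ≠ w}).ConnectedComponent)
    (φ : compSupp T w c → ℝ)
    (hφ : φ ∈ LinearMap.ker (adjM (T.induce (compSupp T w c)) - lam • 1).mulVecLin)
    (hφatt : φ ⟨att T w hT c, (att_mem T w hT c).1⟩ ≠ 0)
    (x : V → ℝ) (hx : x ∈ LinearMap.ker (adjM T - lam • (1 : Matrix V V ℝ)).mulVecLin) :
    x w = 0 := by
  set M := adjM T - lam • (1 : Matrix V V ℝ) with hM
  have hMx : M.mulVec x = 0 := by
    rw [LinearMap.mem_ker, Matrix.mulVecLin_apply] at hx; exact hx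
  have h1 : x ⬝ᵥ (M.mulVec (extC T w c φ)) = x w * φ ⟨att T w hT c, (att_mem T w hT c).1⟩ := by
    rw [extC_rows T w lam hT c φ hφ]
    rw [dotProduct]
    rw [Finset.sum_eq_single w]
    · rw [if_pos rfl]
    · intro u _ hu
      rw [if_neg hu, mul_zero]
    · intro hc; exact absurd (Finset.mem_univ _) hc
  have h2 : x ⬝ᵥ (M.mulVec (extC T w c φ)) = 0 := by
    rw [Matrix.dotProduct_mulVec, ← Matrix.mulVec_transpose, hM, M_symm, ← hM, hMx]
    exact zero_dotProduct _
  rw [h2] at h1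
  exact (mul_eq_zero.1 h1.symm).resolve_right hφatt

/-- Degree inside an induced subgraph. -/
lemma induce_deg (s : Set V) (v : ↥s) :
    ((T.induce s).neighborSet v).ncard = (T.neighborSet ↑v ∩ s).ncard := by
  have himg : Subtype.val '' ((T.induce s).neighborSet v) = T.neighborSet ↑v ∩ s := by
    ext u
    constructor
    · rintro ⟨⟨u', hu'⟩, hmem, rfl⟩
      exact ⟨hmem, hu'⟩
    · rintro ⟨hadj, hus⟩
      exact ⟨⟨u, hus⟩, hadj, rfl⟩
  rw [← himg, Set.ncard_image_of_injective _ Subtype.val_injective]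

/-- A component kernel vector vanishing at the attachment vertex is zero. -/
lemma comp_endpoint (hT : T.IsTree) {c : (T.induce {u | u ≠ w}).ConnectedComponent}
    (hpc : IsPathGraph (T.induce (compSupp T w c)))
    (hdeg : (T.neighborSet (att T w hT c) ∩ compSupp T w c).ncard ≤ 1)
    (φ : compSupp T w c → ℝ)
    (hφ : φ ∈ LinearMap.ker (adjM (T.induce (compSupp T w c)) - lam • 1).mulVecLin)
    (h0 : φ ⟨att T w hT c, (att_mem T w hT c).1⟩ = 0) : φ = 0 := by
  apply ker_eval_endpoint hpc ((mem_ker_iff _ lam φ).1 hφ)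
    (⟨att T w hT c, (att_mem T w hT c).1⟩ : compSupp T w c) ?_ h0
  rw [induce_deg]
  exact hdeg

/-- A nonzero component multiplicity yields a kernel vector nonzero at the attachment. -/
lemma exists_phi (hT : T.IsTree) {c : (T.induce {u | u ≠ w}).ConnectedComponent}
    (hpc : IsPathGraph (T.induce (compSupp T w c)))
    (hdeg : (T.neighborSet (att T w hT c) ∩ compSupp T w c).ncard ≤ 1)
    (h : sMult T (compSupp T w c) lam ≠ 0) :
    ∃ φ ∈ LinearMap.ker (adjM (T.induce (compSupp T w c)) - lam • 1).mulVecLin,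
      φ ⟨att T w hT c, (att_mem T w hT c).1⟩ ≠ 0 := by
  have hK : LinearMap.ker (adjM (T.induce (compSupp T w c)) - lam • 1).mulVecLin ≠ ⊥ := by
    intro hb
    apply h
    rw [sMult_eq, hb, finrank_bot]
  obtain ⟨φ, hφ, hφne⟩ := Submodule.ne_bot_iff _ |>.1 hK
  refine ⟨φ, hφ, fun hc => hφne ?_⟩
  exact comp_endpoint T w lam hT hpc hdeg φ hφ hc

/-- Zero component multiplicity kills the restriction. -/
lemma restr_zero {c : (T.induce {u | u ≠ w}).ConnectedComponent}
    (hc : sMult T (compSupp T w c) lam = 0) (x : V → ℝ)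
    (hx : x ∈ LinearMap.ker (adjM T - lam • (1 : Matrix V V ℝ)).mulVecLin)
    (hw0 : x w = 0) : ∀ u : compSupp T w c, x ↑u = 0 := by
  have hK : LinearMap.ker (adjM (T.induce (compSupp T w c)) - lam • 1).mulVecLin = ⊥ := by
    rw [sMult_eq] at hc
    exact Submodule.finrank_eq_zero.1 hc
  have hmem := restrict_mem_ker T w lam c x hx hw0
  rw [hK, Submodule.mem_bot] at hmem
  intro u
  exact congrFun hmem u

/-- If all restrictions vanish and `x w = 0`, then `x = 0`. -/
lemma zero_of_all (x : V → ℝ) (hw0 : x w = 0)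
    (hcomps : ∀ (c : (T.induce {u | u ≠ w}).ConnectedComponent) (u : compSupp T w c), x ↑u = 0) :
    x = 0 := by
  funext v
  by_cases hv : v = w
  · rw [hv]; exact hw0
  · exact hcomps ((T.induce {u | u ≠ w}).connectedComponentMk ⟨v, hv⟩)
      ⟨v, mem_compSupp_self T w hv⟩

/-- Row equation at `w`. -/
lemma row_w (x : V → ℝ)
    (hx : x ∈ LinearMap.ker (adjM T - lam • (1 : Matrix V V ℝ)).mulVecLin)
    (hw0 : x w = 0) (a : V) (ha : T.Adj w a)
    (hother : ∀ u, T.Adj w u → u ≠ a → x u = 0) : x a = 0 := by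
  have hrow := (mem_ker_iff T lam x).1 hx w
  rw [hw0, mul_zero] at hrow
  rw [Finset.sum_eq_single a] at hrow
  · rwa [if_pos ha] at hrow
  · intro u _ hu
    by_cases hadj : T.Adj w u
    · rw [if_pos hadj]
      exact hother u hadj hu
    · rw [if_neg hadj]
  · intro hc; exact absurd (Finset.mem_univ _) hc

section Cores
variable (hT : T.IsTree)
  (hpaths : ∀ c : (T.induce {u | u ≠ w}).ConnectedComponent,
      IsPathGraph (T.induce (compSupp T w c)) ∧
      ∀ v ∈ compSupp T w c, T.Adj w v →
        (T.neighborSet v ∩ compSupp T w c).ncard ≤ 1)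
include hT hpaths

lemma hdeg_att (c : (T.induce {u | u ≠ w}).ConnectedComponent) :
    (T.neighborSet (att T w hT c) ∩ compSupp T w c).ncard ≤ 1 :=
  (hpaths c).2 (att T w hT c) (att_mem T w hT c).1 (att_mem T w hT c).2

lemma coreA (hz : ∀ c : (T.induce {u | u ≠ w}).ConnectedComponent,
      sMult T (compSupp T w c) lam = 0) :
    Module.finrank ℝ (LinearMap.ker (adjM T - lam • (1 : Matrix V V ℝ)).mulVecLin) ≤ 1 := by
  apply finrank_le_one_of_eval _ w
  intro x hx hw0
  exact zero_of_all T w x hw0 (fun c u => restr_zero T w lam (hz c) x hx hw0 u)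

lemma coreOne (c1 : (T.induce {u | u ≠ w}).ConnectedComponent)
    (h1 : sMult T (compSupp T w c1) lam ≠ 0)
    (hrest : ∀ c, c ≠ c1 → sMult T (compSupp T w c) lam = 0) :
    LinearMap.ker (adjM T - lam • (1 : Matrix V V ℝ)).mulVecLin = ⊥ := by
  rw [Submodule.eq_bot_iff]
  intro x hx
  obtain ⟨φ, hφ, hφne⟩ := exists_phi T w lam hT (hpaths c1).1 (hdeg_att T w hT hpaths c1) h1
  have hw0 : x w = 0 := eval_w_zero T w lam hT c1 φ hφ hφne x hx
  have hatt1 : x (att T w hT c1) = 0 := by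
    apply row_w T w lam x hx hw0 _ (att_mem T w hT c1).2
    intro u hadju hune
    have huw : u ≠ w := fun h => T.loopless.irrefl w (h ▸ hadju)
    set cu := (T.induce {u | u ≠ w}).connectedComponentMk ⟨u, huw⟩ with hcu
    have humem : u ∈ compSupp T w cu := mem_compSupp_self T w huw
    by_cases hc : cu = c1
    · exact absurd (att_unique T w hT ⟨hc ▸ humem, hadju⟩) hune
    · exact restr_zero T w lam (hrest cu hc) x hx hw0 ⟨u, humem⟩
  have hres1 : (fun u : compSupp T w c1 => x ↑u) = 0 :=
    comp_endpoint T w lam hT (hpaths c1).1 (hdeg_att T w hT hpaths c1) _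
      (restrict_mem_ker T w lam c1 x hx hw0) hatt1
  apply zero_of_all T w x hw0
  intro c u
  by_cases hc : c = c1
  · subst hc; exact congrFun hres1 u
  · exact restr_zero T w lam (hrest c hc) x hx hw0 u

lemma coreTwo (c1 c2 : (T.induce {u | u ≠ w}).ConnectedComponent) (h12 : c1 ≠ c2)
    (h1 : sMult T (compSupp T w c1) lam ≠ 0)
    (h2 : sMult T (compSupp T w c2) lam ≠ 0)
    (hrest : ∀ c, c ≠ c1 → c ≠ c2 → sMult T (compSupp T w c) lam = 0) :
    Module.finrank ℝ (LinearMap.ker (adjM T - lam • (1 : Matrix V V ℝ)).mulVecLin) ≤ 1 := by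
  apply finrank_le_one_of_eval _ (att T w hT c1)
  intro x hx hatt1
  obtain ⟨φ, hφ, hφne⟩ := exists_phi T w lam hT (hpaths c1).1 (hdeg_att T w hT hpaths c1) h1
  have hw0 : x w = 0 := eval_w_zero T w lam hT c1 φ hφ hφne x hx
  have hres1 : (fun u : compSupp T w c1 => x ↑u) = 0 :=
    comp_endpoint T w lam hT (hpaths c1).1 (hdeg_att T w hT hpaths c1) _
      (restrict_mem_ker T w lam c1 x hx hw0) hatt1
  have hatt2 : x (att T w hT c2) = 0 := by
    apply row_w T w lam x hx hw0 _ (att_mem T w hT c2).2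
    intro u hadju hune
    have huw : u ≠ w := fun h => T.loopless.irrefl w (h ▸ hadju)
    set cu := (T.induce {u | u ≠ w}).connectedComponentMk ⟨u, huw⟩ with hcu
    have humem : u ∈ compSupp T w cu := mem_compSupp_self T w huw
    by_cases hc : cu = c2
    · exact absurd (att_unique T w hT ⟨hc ▸ humem, hadju⟩) hune
    · by_cases hc1 : cu = c1
      · have : u ∈ compSupp T w c1 := hc1 ▸ humem
        exact congrFun hres1 ⟨u, this⟩
      · exact restr_zero T w lam (hrest cu hc1 hc) x hx hw0 ⟨u, humem⟩
  have hres2 : (fun u : compSupp T w c2 => x ↑u) = 0 :=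
    comp_endpoint T w lam hT (hpaths c2).1 (hdeg_att T w hT hpaths c2) _
      (restrict_mem_ker T w lam c2 x hx hw0) hatt2
  apply zero_of_all T w x hw0
  intro c u
  by_cases hc : c = c1
  · subst hc; exact congrFun hres1 u
  · by_cases hc2 : c = c2
    · subst hc2; exact congrFun hres2 u
    · exact restr_zero T w lam (hrest c hc hc2) x hx hw0 u

lemma coreThree (c1 c2 c3 : (T.induce {u | u ≠ w}).ConnectedComponent)
    (h12 : c1 ≠ c2) (h13 : c1 ≠ c3) (h23 : c2 ≠ c3)
    (h1 : sMult T (compSupp T w c1) lam ≠ 0)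
    (h2 : sMult T (compSupp T w c2) lam ≠ 0)
    (h3 : sMult T (compSupp T w c3) lam ≠ 0) :
    2 ≤ Module.finrank ℝ (LinearMap.ker (adjM T - lam • (1 : Matrix V V ℝ)).mulVecLin) := by
  obtain ⟨φ1, hφ1, ha1⟩ := exists_phi T w lam hT (hpaths c1).1 (hdeg_att T w hT hpaths c1) h1
  obtain ⟨φ2, hφ2, ha2⟩ := exists_phi T w lam hT (hpaths c2).1 (hdeg_att T w hT hpaths c2) h2
  obtain ⟨φ3, hφ3, ha3⟩ := exists_phi T w lam hT (hpaths c3).1 (hdeg_att T w hT hpaths c3) h3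
  set M := adjM T - lam • (1 : Matrix V V ℝ) with hM
  set a1 := φ1 ⟨att T w hT c1, (att_mem T w hT c1).1⟩ with ha1d
  set a2 := φ2 ⟨att T w hT c2, (att_mem T w hT c2).1⟩ with ha2d
  set a3 := φ3 ⟨att T w hT c3, (att_mem T w hT c3).1⟩ with ha3d
  have hrow1 : M.mulVecLin (extC T w c1 φ1) = fun v => if v = w then a1 else 0 := by
    rw [Matrix.mulVecLin_apply]; exact extC_rows T w lam hT c1 φ1 hφ1
  have hrow2 : M.mulVecLin (extC T w c2 φ2) = fun v => if v = w then a2 else 0 := by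
    rw [Matrix.mulVecLin_apply]; exact extC_rows T w lam hT c2 φ2 hφ2
  have hrow3 : M.mulVecLin (extC T w c3 φ3) = fun v => if v = w then a3 else 0 := by
    rw [Matrix.mulVecLin_apply]; exact extC_rows T w lam hT c3 φ3 hφ3
  set y1 := a2 • extC T w c1 φ1 - a1 • extC T w c2 φ2 with hy1d
  set y2 := a3 • extC T w c2 φ2 - a2 • extC T w c3 φ3 with hy2d
  have hy1 : y1 ∈ LinearMap.ker M.mulVecLin := by
    rw [LinearMap.mem_ker, hy1d, map_sub, LinearMap.map_smul, LinearMap.map_smul, hrow1, hrow2]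
    funext v
    by_cases hv : v = w <;> simp [hv] <;> ring
  have hy2 : y2 ∈ LinearMap.ker M.mulVecLin := by
    rw [LinearMap.mem_ker, hy2d, map_sub, LinearMap.map_smul, LinearMap.map_smul, hrow2, hrow3]
    funext v
    by_cases hv : v = w <;> simp [hv] <;> ring
  -- values at the attachments
  have hnot12 : att T w hT c1 ∉ compSupp T w c2 := fun hmem =>
    h12 (compSupp_disjoint T w (att_mem T w hT c1).1 hmem)
  have hnot13 : att T w hT c1 ∉ compSupp T w c3 := fun hmem =>
    h13 (compSupp_disjoint T w (att_mem T w hT c1).1 hmem)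
  have hnot32 : att T w hT c3 ∉ compSupp T w c2 := fun hmem =>
    h23 (compSupp_disjoint T w hmem (att_mem T w hT c3).1)
  have hnot31 : att T w hT c3 ∉ compSupp T w c1 := fun hmem =>
    h13 (compSupp_disjoint T w hmem (att_mem T w hT c3).1)
  have hv11 : y1 (att T w hT c1) = a2 * a1 := by
    rw [hy1d]
    simp only [Pi.sub_apply, Pi.smul_apply, smul_eq_mul]
    rw [show extC T w c1 φ1 (att T w hT c1) = a1 from dif_pos (att_mem T w hT c1).1,
      show extC T w c2 φ2 (att T w hT c1) = 0 from dif_neg hnot12]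
    ring
  have hv21 : y2 (att T w hT c1) = 0 := by
    rw [hy2d]
    simp only [Pi.sub_apply, Pi.smul_apply, smul_eq_mul]
    rw [show extC T w c2 φ2 (att T w hT c1) = 0 from dif_neg hnot12,
      show extC T w c3 φ3 (att T w hT c1) = 0 from dif_neg hnot13]
    ring
  have hv13 : y1 (att T w hT c3) = 0 := by
    rw [hy1d]
    simp only [Pi.sub_apply, Pi.smul_apply, smul_eq_mul]
    rw [show extC T w c1 φ1 (att T w hT c3) = 0 from dif_neg hnot31,
      show extC T w c2 φ2 (att T w hT c3) = 0 from dif_neg hnot32]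
    ring
  have hv23 : y2 (att T w hT c3) = -(a2 * a3) := by
    rw [hy2d]
    simp only [Pi.sub_apply, Pi.smul_apply, smul_eq_mul]
    rw [show extC T w c2 φ2 (att T w hT c3) = 0 from dif_neg hnot32,
      show extC T w c3 φ3 (att T w hT c3) = a3 from dif_pos (att_mem T w hT c3).1]
    ring
  have hli : LinearIndependent ℝ
      ![(⟨y1, hy1⟩ : LinearMap.ker M.mulVecLin), ⟨y2, hy2⟩] := by
    rw [LinearIndependent.pair_iff]
    intro s t hst
    have hval : s • y1 + t • y2 = 0 := by
      have := congrArg Subtype.val hst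
      simpa using this
    constructor
    · have := congrFun hval (att T w hT c1)
      simp only [Pi.add_apply, Pi.smul_apply, smul_eq_mul, Pi.zero_apply, hv11, hv21] at this
      have hs : s * (a2 * a1) = 0 := by linarith
      rcases mul_eq_zero.1 hs with h | h
      · exact h
      · exact absurd (mul_eq_zero.1 h) (by push_neg; exact ⟨ha2, ha1⟩)
    · have := congrFun hval (att T w hT c3)
      simp only [Pi.add_apply, Pi.smul_apply, smul_eq_mul, Pi.zero_apply, hv13, hv23] at this
      have ht : t * (a2 * a3) = 0 := by linarith
      rcases mul_eq_zero.1 ht with h | h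
      · exact h
      · exact absurd (mul_eq_zero.1 h) (by push_neg; exact ⟨ha2, ha3⟩)
  have := hli.fintype_card_le_finrank
  simpa using this

lemma sMult_le_one (c : (T.induce {u | u ≠ w}).ConnectedComponent) :
    sMult T (compSupp T w c) lam ≤ 1 := by
  rw [sMult_eq]
  apply finrank_le_one_of_eval _ (⟨att T w hT c, (att_mem T w hT c).1⟩ : compSupp T w c)
  intro φ hφ h0
  exact comp_endpoint T w lam hT (hpaths c).1 (hdeg_att T w hT hpaths c) φ hφ h0

end Cores

end Main

end Spider

open Spider in
/-- Theorem 1.40 in terms of the three legs of the spider. -/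
theorem stmt19 {V : Type*} [Fintype V] (T : SimpleGraph V) (hT : T.IsTree)
    (hp : pendCount T = 3) (w : V) (hw : deg T w = 3)
    (huniq : ∀ u : V, 3 ≤ deg T u → u = w)
    (hpaths : ∀ c : (T.induce {u | u ≠ w}).ConnectedComponent,
      IsPathGraph (T.induce (compSupp T w c)) ∧
      ∀ v ∈ compSupp T w c, T.Adj w v →
        (T.neighborSet v ∩ compSupp T w c).ncard ≤ 1)
    (lam : ℝ) (heig : 1 ≤ gMult T lam) :
    gMult T lam = 1 ↔
      ((∀ c : (T.induce {u | u ≠ w}).ConnectedComponent,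
          sMult T (compSupp T w c) lam = 0) ∨
       (∃ c₀ : (T.induce {u | u ≠ w}).ConnectedComponent,
          sMult T (compSupp T w c₀) lam = 0 ∧
          ∀ c ≠ c₀, sMult T (compSupp T w c) lam = 1)) := by
  classical
  have hg : gMult T lam = Module.finrank ℝ
      (LinearMap.ker (adjM T - lam • (1 : Matrix V V ℝ)).mulVecLin) := gMult_eq T lam
  -- components
  have hc3 : Nat.card (T.induce {u | u ≠ w}).ConnectedComponent = 3 := by
    rw [card_components T w hT, hw]
  have : Finite (T.induce {u | u ≠ w}).ConnectedComponent := by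
    apply Nat.finite_of_card_ne_zero
    rw [hc3]; omega
  have hfintype : Fintype (T.induce {u | u ≠ w}).ConnectedComponent := Fintype.ofFinite _
  have hcard : (Finset.univ :
      Finset (T.induce {u | u ≠ w}).ConnectedComponent).card = 3 := by
    rw [Finset.card_univ, ← Nat.card_eq_fintype_card, hc3]
  obtain ⟨a, b, c, hab, hac, hbc, huniv⟩ := Finset.card_eq_three.1 hcard
  have hall : ∀ x : (T.induce {u | u ≠ w}).ConnectedComponent,
      x = a ∨ x = b ∨ x = c := by
    intro x
    have hx : x ∈ (Finset.univ : Finset _) := Finset.mem_univ x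
    rw [huniv] at hx
    simpa using hx
  have hle1 : ∀ c', sMult T (compSupp T w c') lam ≤ 1 :=
    fun c' => sMult_le_one T w lam hT hpaths c'
  by_cases hA : sMult T (compSupp T w a) lam = 0 <;>
  by_cases hB : sMult T (compSupp T w b) lam = 0 <;>
  by_cases hC : sMult T (compSupp T w c) lam = 0
  -- case 1: all zero
  · apply iff_of_true
    · refine le_antisymm ?_ heig
      rw [hg]
      apply coreA T w lam hT hpaths
      intro c'
      rcases hall c' with rfl | rfl | rfl <;> assumption
    · left
      intro c'
      rcases hall c' with rfl | rfl | rfl <;> assumption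
  -- case 2: only c nonzero
  · exfalso
    have hbot := coreOne T w lam hT hpaths c hC ?hrest
    · rw [hg, hbot, finrank_bot] at heig; omega
    case hrest =>
      intro c' hc'
      rcases hall c' with rfl | rfl | rfl
      · exact hA
      · exact hB
      · exact absurd rfl hc'
  -- case 3: only b nonzero
  · exfalso
    have hbot := coreOne T w lam hT hpaths b hB ?hrest
    · rw [hg, hbot, finrank_bot] at heig; omega
    case hrest =>
      intro c' hc'
      rcases hall c' with rfl | rfl | rfl
      · exact hA
      · exact absurd rfl hc'
      · exact hC
  -- case 4: b, c nonzero, a zero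
  · apply iff_of_true
    · refine le_antisymm ?_ heig
      rw [hg]
      apply coreTwo T w lam hT hpaths b c hbc hB hC
      intro c' hc1 hc2
      rcases hall c' with rfl | rfl | rfl
      · exact hA
      · exact absurd rfl hc1
      · exact absurd rfl hc2
    · right
      refine ⟨a, hA, ?_⟩
      intro c' hc'
      rcases hall c' with rfl | rfl | rfl
      · exact absurd rfl hc'
      · exact le_antisymm (hle1 _) (Nat.one_le_iff_ne_zero.2 hB)
      · exact le_antisymm (hle1 _) (Nat.one_le_iff_ne_zero.2 hC)
  -- case 5: only a nonzero
  · exfalso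
    have hbot := coreOne T w lam hT hpaths a hA ?hrest
    · rw [hg, hbot, finrank_bot] at heig; omega
    case hrest =>
      intro c' hc'
      rcases hall c' with rfl | rfl | rfl
      · exact absurd rfl hc'
      · exact hB
      · exact hC
  -- case 6: a, c nonzero, b zero
  · apply iff_of_true
    · refine le_antisymm ?_ heig
      rw [hg]
      apply coreTwo T w lam hT hpaths a c hac hA hC
      intro c' hc1 hc2
      rcases hall c' with rfl | rfl | rfl
      · exact absurd rfl hc1
      · exact hB
      · exact absurd rfl hc2
    · right
      refine ⟨b, hB, ?_⟩
      intro c' hc'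
      rcases hall c' with rfl | rfl | rfl
      · exact le_antisymm (hle1 _) (Nat.one_le_iff_ne_zero.2 hA)
      · exact absurd rfl hc'
      · exact le_antisymm (hle1 _) (Nat.one_le_iff_ne_zero.2 hC)
  -- case 7: a, b nonzero, c zero
  · apply iff_of_true
    · refine le_antisymm ?_ heig
      rw [hg]
      apply coreTwo T w lam hT hpaths a b hab hA hB
      intro c' hc1 hc2
      rcases hall c' with rfl | rfl | rfl
      · exact absurd rfl hc1
      · exact absurd rfl hc2
      · exact hC
    · right
      refine ⟨c, hC, ?_⟩
      intro c' hc'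
      rcases hall c' with rfl | rfl | rfl
      · exact le_antisymm (hle1 _) (Nat.one_le_iff_ne_zero.2 hA)
      · exact le_antisymm (hle1 _) (Nat.one_le_iff_ne_zero.2 hB)
      · exact absurd rfl hc'
  -- case 8: all nonzero
  · apply iff_of_false
    · have h2 := coreThree T w lam hT hpaths a b c hab hac hbc hA hB hC
      rw [hg]
      omega
    · rintro (hall0 | ⟨c0, hc00, -⟩)
      · exact hA (hall0 a)
      · rcases hall c0 with rfl | rfl | rfl
        · exact hA hc00
        · exact hB hc00
        · exact hC hc00
end
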